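/- arXiv:2105.11737 — 3 statements merged into one kernel-verified Lean document; each statement's English description precedes it below -/
import Mathlib

section
/- ID is the smallest non-trivial characteristic class: if a characteristic class 𝓕 contains a measure-theoretic dynamical system on a standard Borel probability space which is not (isomorphic to) the one-point system, then 𝓕 contains the identity automorphism of every standard Borel probability space. -/
/- NOTE: structures with instance-implicit fields must be declared before
`open MeasureTheory` (the latter's notations clash with `[...]` fields). -/
/-- A measure-theoretic dynamical system: an automorphism (an invertible
measure-preserving transformation) of a standard Borel probability space. -/
structure MSys where
  Z : Type
  [mZ : MeasurableSpace Z]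
  [sb : StandardBorelSpace Z]
  μ : MeasureTheory.Measure Z
  prob : MeasureTheory.IsProbabilityMeasure μ
  T : Z ≃ᵐ Z
  mp : MeasureTheory.MeasurePreserving T μ μ

attribute [instance] MSys.mZ MSys.sb MSys.prob
open MeasureTheory Filter Topology
open scoped ENNReal
/-- `Y` is a (measure-theoretic) factor of `X`. -/
def IsFactorOf (Y X : MSys) : Prop :=
  ∃ π : X.Z → Y.Z, MeasurePreserving π X.μ Y.μ ∧ ∀ᵐ z ∂X.μ, π (X.T z) = Y.T (π z)

/-- `X` and `Y` are isomorphic measure-theoretic dynamical systems. -/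
def IsIsoOf (X Y : MSys) : Prop :=
  ∃ π : X.Z → Y.Z, MeasurePreserving π X.μ Y.μ ∧ (∀ᵐ z ∂X.μ, π (X.T z) = Y.T (π z)) ∧
    ∃ σ : Y.Z → X.Z, MeasurePreserving σ Y.μ X.μ ∧ (∀ᵐ z ∂X.μ, σ (π z) = z)

/-- The product transformation on the product of the phase spaces of a countable
family of systems. -/
noncomputable def prodMapSys (Xi : ℕ → MSys) : (∀ i, (Xi i).Z) ≃ᵐ (∀ i, (Xi i).Z) :=
  MeasurableEquiv.piCongrRight (fun i => (Xi i).T)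

/-- `ρ` is a (countable) joining of the family `Xi` : a probability measure on the
product, invariant under the product transformation, projecting onto the given
measures. -/
def IsJoining (Xi : ℕ → MSys) (ρ : Measure (∀ i, (Xi i).Z)) : Prop :=
  IsProbabilityMeasure ρ ∧ MeasurePreserving (prodMapSys Xi) ρ ρ ∧
    ∀ i, Measure.map (fun z => z i) ρ = (Xi i).μ

/-- The system given by a joining `ρ` of the countable family `Xi`. -/
noncomputable def joinSys (Xi : ℕ → MSys) (ρ : Measure (∀ i, (Xi i).Z))
    (h : IsJoining Xi ρ) : MSys :=
  { Z := ∀ i, (Xi i).Z, μ := ρ, prob := h.1, T := prodMapSys Xi, mp := h.2.1 }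

/-- A class `F` of measure-theoretic dynamical systems is characteristic if it is
closed under isomorphisms, factors and countable joinings. -/
def IsCharacteristic (F : MSys → Prop) : Prop :=
  (∀ X Y, IsIsoOf X Y → F X → F Y) ∧
  (∀ X Y, F X → IsFactorOf Y X → F Y) ∧
  (∀ Xi : ℕ → MSys, (∀ i, F (Xi i)) →
    ∀ (ρ : Measure (∀ i, (Xi i).Z)) (h : IsJoining Xi ρ), F (joinSys Xi ρ h))

/-- The trivial one-point measure-theoretic dynamical system. -/
noncomputable def pointSys : MSys :=
  { Z := PUnit, μ := Measure.dirac PUnit.unit, prob := inferInstance,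
    T := MeasurableEquiv.refl PUnit, mp := MeasurePreserving.id _ }

/-- The identity automorphism on a standard Borel probability space. -/
noncomputable def idSys (Z : Type) [MeasurableSpace Z] [StandardBorelSpace Z]
    (μ : Measure Z) (hp : IsProbabilityMeasure μ) : MSys :=
  { Z := Z, μ := μ, prob := hp, T := MeasurableEquiv.refl Z, mp := MeasurePreserving.id μ }

/-! ### Helpers -/

noncomputable def bern (p : ℝ≥0∞) : Measure Bool :=
  p • Measure.dirac true + (1 - p) • Measure.dirac false

lemma bern_true (p : ℝ≥0∞) : bern p {true} = p := by
  simp [bern, Measure.dirac_apply]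

lemma bern_false (p : ℝ≥0∞) : bern p {false} = 1 - p := by
  simp [bern, Measure.dirac_apply]

lemma bern_prob {p : ℝ≥0∞} (hp : p ≤ 1) : IsProbabilityMeasure (bern p) := by
  constructor
  simp [bern, Measure.dirac_apply]
  exact add_tsub_cancel_of_le hp

lemma eq_bern (μ : Measure Bool) (h : IsProbabilityMeasure μ) : μ = bern (μ {true}) := by
  apply Measure.ext_of_singleton
  intro a
  cases a
  · rw [bern_false]
    have : ({true}ᶜ : Set Bool) = {false} := by ext b; cases b <;> simp
    rw [← this, measure_compl (measurableSet_singleton _) (measure_ne_top _ _), measure_univ]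
  · rw [bern_true]

/-- The Bernoulli identity system. -/
noncomputable def bsys (p : ℝ≥0∞) (hp : p ≤ 1) : MSys :=
  idSys Bool (bern p) (bern_prob hp)

lemma bsys_Z (p : ℝ≥0∞) (hp : p ≤ 1) : (bsys p hp).Z = Bool := rfl

lemma prodMapSys_bsys_coe (q : ℕ → ℝ≥0∞) (hq : ∀ i, q i ≤ 1) :
    ⇑(prodMapSys (fun i => bsys (q i) (hq i))) = id := rfl

/-- two-fold coupling workhorse: from `B_p, B_q ∈ F` and a coupling `κ`,
`B_{κ(f⁻¹ true)} ∈ F`. -/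
lemma bool_join {F : MSys → Prop} (hF : IsCharacteristic F) {p q : ℝ≥0∞} (hp : p ≤ 1) (hq : q ≤ 1)
    (hFp : F (bsys p hp)) (hFq : F (bsys q hq))
    (κ : Measure (Bool × Bool)) (hκ : IsProbabilityMeasure κ)
    (hfst : κ.map Prod.fst = bern p) (hsnd : κ.map Prod.snd = bern q)
    (f : Bool × Bool → Bool) {r : ℝ≥0∞} (hr : r ≤ 1)
    (hrval : κ (f ⁻¹' {true}) = r) :
    F (bsys r hr) := by
  classical
  haveI := hκ
  let Xi : ℕ → MSys := fun i => bsys (if i = 0 then p else q) (by split <;> assumption)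
  let J : Bool × Bool → (ℕ → Bool) := fun x => fun i => if i = 0 then x.1 else x.2
  have hj : Measurable J := by
    apply measurable_pi_lambda
    intro i
    show Measurable fun c : Bool × Bool => if i = 0 then c.1 else c.2
    split
    · exact measurable_fst
    · exact measurable_snd
  let ρ : Measure (ℕ → Bool) := κ.map J
  have hcoe : ⇑(prodMapSys Xi) = id :=
    prodMapSys_bsys_coe (fun i => if i = 0 then p else q) _
  have hπmeas : Measurable (fun x : ℕ → Bool => f (x 0, x 1)) :=
    (measurable_of_countable f).comp ((measurable_pi_apply 0).prodMk (measurable_pi_apply 1))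
  have hjoin : IsJoining Xi ρ := by
    refine ⟨?_, ?_, ?_⟩
    · exact Measure.isProbabilityMeasure_map hj.aemeasurable
    · refine ⟨(prodMapSys Xi).measurable, ?_⟩
      show Measure.map (⇑(prodMapSys Xi)) ρ = ρ
      rw [hcoe]
      exact Measure.map_id
    · intro i
      show Measure.map (fun z : ℕ → Bool => z i) ρ = bern (if i = 0 then p else q)
      rw [Measure.map_map (measurable_pi_apply i) hj]
      by_cases hi : i = 0
      · subst hi
        have h2 : ((fun z : ℕ → Bool => z 0) ∘ J) = Prod.fst := by
          funext x; simp [J]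
        rw [h2, hfst, if_pos rfl]
      · have h2 : ((fun z : ℕ → Bool => z i) ∘ J) = Prod.snd := by
          funext x; simp [J, hi]
        rw [h2, hsnd, if_neg hi]
  have hmem := hF.2.2 Xi (by intro i; cases i; exacts [hFp, hFq]) ρ hjoin
  apply hF.2.1 _ _ hmem
  refine ⟨fun x : ℕ → Bool => f (x 0, x 1), ⟨hπmeas, ?_⟩, ?_⟩
  · show Measure.map (fun x : ℕ → Bool => f (x 0, x 1)) ρ = bern r
    rw [Measure.map_map hπmeas hj]
    have h2 : ((fun x : ℕ → Bool => f (x 0, x 1)) ∘ J) = f := by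
      funext x; simp [J]
    rw [h2]
    rw [eq_bern (κ.map f) (Measure.isProbabilityMeasure_map (measurable_of_countable f).aemeasurable)]
    congr 1
    rw [Measure.map_apply (measurable_of_countable f) (measurableSet_singleton _)]
    exact hrval
  · apply ae_of_all
    intro z
    show f (((prodMapSys Xi) z) 0, ((prodMapSys Xi) z) 1) = (MeasurableEquiv.refl Bool) (f (z 0, z 1))
    rw [hcoe]
    rfl

/-! ### four-atom couplings on `Bool × Bool` -/

noncomputable def coup4 (a b c d : ℝ≥0∞) : Measure (Bool × Bool) :=
  a • Measure.dirac (true, true) + b • Measure.dirac (true, false) +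
    c • Measure.dirac (false, true) + d • Measure.dirac (false, false)

open scoped Classical in
lemma coup4_apply (a b c d : ℝ≥0∞) (s : Set (Bool × Bool)) :
    coup4 a b c d s =
      (if (true, true) ∈ s then a else 0) + (if (true, false) ∈ s then b else 0) +
        (if (false, true) ∈ s then c else 0) + (if (false, false) ∈ s then d else 0) := by
  simp [coup4, Measure.dirac_apply, Set.indicator_apply, mul_ite]

lemma coup4_prob {a b c d : ℝ≥0∞} (h : a + b + c + d = 1) :
    IsProbabilityMeasure (coup4 a b c d) := by
  constructor
  rw [coup4_apply]
  simpa using h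

lemma coup4_fst {a b c d p : ℝ≥0∞} (h1 : a + b = p) (h2 : c + d = 1 - p) :
    (coup4 a b c d).map Prod.fst = bern p := by
  apply Measure.ext_of_singleton
  intro x
  rw [Measure.map_apply measurable_fst (measurableSet_singleton _), coup4_apply]
  cases x
  · rw [bern_false, ← h2]; simp
  · rw [bern_true, ← h1]; simp

lemma coup4_snd {a b c d p : ℝ≥0∞} (h1 : a + c = p) (h2 : b + d = 1 - p) :
    (coup4 a b c d).map Prod.snd = bern p := by
  apply Measure.ext_of_singleton
  intro x
  rw [Measure.map_apply measurable_snd (measurableSet_singleton _), coup4_apply]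
  cases x
  · rw [bern_false, ← h2]; simp [add_comm, add_assoc, add_left_comm]
  · rw [bern_true, ← h1]; simp [add_comm, add_assoc, add_left_comm]

lemma half_le_one : (2⁻¹ : ℝ≥0∞) ≤ 1 := ENNReal.inv_le_one.mpr one_le_two

lemma one_sub_half : (1 : ℝ≥0∞) - 2⁻¹ = 2⁻¹ := by
  conv_lhs => rw [← ENNReal.inv_two_add_inv_two]
  rw [ENNReal.add_sub_cancel_right (by simp)]

/-- complement: from `B_p` get `B_{1-p}`. -/
lemma bool_not {F : MSys → Prop} (hF : IsCharacteristic F) {p : ℝ≥0∞} (hp : p ≤ 1)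
    (hFp : F (bsys p hp)) : F (bsys (1 - p) tsub_le_self) := by
  apply hF.2.1 _ _ hFp
  refine ⟨fun b : Bool => !b, ⟨measurable_of_countable (fun b : Bool => !b), ?_⟩,
    ae_of_all _ fun z => rfl⟩
  show (bern p).map (fun b => !b) = bern (1 - p)
  apply Measure.ext_of_singleton
  intro x
  rw [Measure.map_apply (measurable_of_countable _) (measurableSet_singleton _)]
  cases x
  · have hs : ((fun b : Bool => !b) ⁻¹' {false} : Set Bool) = {true} := by ext b; cases b <;> simp
    rw [hs, bern_true, bern_false, ENNReal.sub_sub_cancel ENNReal.one_ne_top hp]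
  · have hs : ((fun b : Bool => !b) ⁻¹' {true} : Set Bool) = {false} := by ext b; cases b <;> simp
    rw [hs, bern_false, bern_true]

/-- doubling: from `B_q`, `q ≤ 1/2`, get `B_{min (2q) (1/2)}`. -/
lemma bool_double {F : MSys → Prop} (hF : IsCharacteristic F) {q : ℝ≥0∞}
    (hq1 : q ≤ 1) (hq : q ≤ 2⁻¹) (hFq : F (bsys q hq1)) :
    F (bsys (min (2 * q) 2⁻¹) ((min_le_right _ _).trans half_le_one)) := by
  set r := min (2 * q) 2⁻¹ with hrdef
  have hqt : q ≠ ⊤ := (hq1.trans_lt ENNReal.one_lt_top).ne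
  have hqr : q ≤ r := le_min (le_mul_of_one_le_left zero_le one_le_two) hq
  have hr2q : r ≤ 2 * q := min_le_left _ _
  have hr1 : r ≤ 1 := (min_le_right _ _).trans half_le_one
  have hab : (2 * q - r) + (r - q) = q := by
    rw [tsub_add_tsub_cancel hr2q hqr, two_mul, ENNReal.add_sub_cancel_right hqt]
  have hcd : (r - q) + (1 - r) = 1 - q := by
    rw [add_comm, tsub_add_tsub_cancel hr1 hqr]
  refine bool_join hF hq1 hq1 hFq hFq (coup4 (2 * q - r) (r - q) (r - q) (1 - r))
    (coup4_prob ?_) (coup4_fst hab hcd) (coup4_snd hab hcd) (fun x => x.1 || x.2) hr1 ?_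
  · rw [hab, add_tsub_cancel_of_le hqr, add_tsub_cancel_of_le hr1]
  · rw [coup4_apply]
    norm_num
    rw [hab, add_tsub_cancel_of_le hqr]

lemma reach_half {F : MSys → Prop} (hF : IsCharacteristic F) {q : ℝ≥0∞}
    (hq0 : q ≠ 0) (hq : q ≤ 2⁻¹) (hFq : F (bsys q (hq.trans half_le_one))) :
    F (bsys 2⁻¹ half_le_one) := by
  have key : ∀ n : ℕ, F (bsys (min (2 ^ n * q) 2⁻¹) ((min_le_right _ _).trans half_le_one)) := by
    intro n
    induction n with
    | zero =>
      convert hFq using 2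
      rw [pow_zero, one_mul]
      exact min_eq_left hq
    | succ n ih =>
      have h2 := bool_double hF ((min_le_right _ _).trans half_le_one) (min_le_right _ _) ih
      convert h2 using 2
      rcases le_total (2 ^ n * q) 2⁻¹ with h | h
      · rw [min_eq_left h, pow_succ, mul_comm (2 ^ n) 2, mul_assoc]
      · have h21 : (2 : ℝ≥0∞) * 2⁻¹ = 1 := ENNReal.mul_inv_cancel two_ne_zero ENNReal.ofNat_ne_top
        have hstep : (2 : ℝ≥0∞) ^ (n + 1) * q = 2 * (2 ^ n * q) := by
          rw [pow_succ, mul_comm (2 ^ n) 2, mul_assoc]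
        rw [min_eq_right h, h21, hstep, min_eq_right half_le_one,
          min_eq_right (h.trans (le_mul_of_one_le_left zero_le one_le_two))]
  obtain ⟨n, hn⟩ := ENNReal.exists_inv_two_pow_lt hq0
  have h1 : (2 : ℝ≥0∞)⁻¹ ≤ 2 ^ n * q := by
    have he : (1 : ℝ≥0∞) = 2 ^ n * 2⁻¹ ^ n := by
      rw [← mul_pow, ENNReal.mul_inv_cancel two_ne_zero ENNReal.ofNat_ne_top, one_pow]
    calc (2 : ℝ≥0∞)⁻¹ ≤ 1 := half_le_one
    _ = 2 ^ n * 2⁻¹ ^ n := he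
    _ ≤ 2 ^ n * q := mul_le_mul_right hn.le _
  convert key n using 2
  rw [min_eq_right h1]

/-- all parameters from `B_{1/2}`. -/
lemma bool_all {F : MSys → Prop} (hF : IsCharacteristic F)
    (hhalf : F (bsys 2⁻¹ half_le_one)) {p : ℝ≥0∞} (hp : p ≤ 1) : F (bsys p hp) := by
  have small : ∀ t : ℝ≥0∞, (ht : t ≤ 2⁻¹) → F (bsys t (ht.trans half_le_one)) := by
    intro t ht
    refine bool_join hF half_le_one half_le_one hhalf hhalf
      (coup4 t (2⁻¹ - t) (2⁻¹ - t) t) (coup4_prob ?_)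
      (coup4_fst (add_tsub_cancel_of_le ht) ?_) (coup4_snd (add_tsub_cancel_of_le ht) ?_)
      (fun x => x.1 && x.2) (ht.trans half_le_one) ?_
    · rw [add_tsub_cancel_of_le ht, add_assoc, add_comm (2⁻¹ - t) t, add_tsub_cancel_of_le ht,
        ENNReal.inv_two_add_inv_two]
    · rw [add_comm, add_tsub_cancel_of_le ht, one_sub_half]
    · rw [add_comm, add_tsub_cancel_of_le ht, one_sub_half]
    · rw [coup4_apply]
      norm_num
  rcases le_total p 2⁻¹ with h | h
  · have := small p h
    exact this
  · have h1p : 1 - p ≤ 2⁻¹ := by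
      rw [← one_sub_half]
      exact tsub_le_tsub_left h 1
    have h2 := bool_not hF (h1p.trans half_le_one) (small (1 - p) h1p)
    convert h2 using 2
    rw [ENNReal.sub_sub_cancel ENNReal.one_ne_top hp]

/-! ### From a non-trivial system to a non-trivial Bernoulli identity system -/

lemma eq_dirac_of {Z : Type} [MeasurableSpace Z] [MeasurableSingletonClass Z]
    (μ : Measure Z) [IsProbabilityMeasure μ] {z₀ : Z} (h : μ {z₀} = 1) :
    μ = Measure.dirac z₀ := by
  ext s hs
  rw [Measure.dirac_apply' _ hs]
  have hc0 : μ {z₀}ᶜ = 0 := by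
    rw [prob_compl_eq_one_sub (μ := μ) (measurableSet_singleton _), h, tsub_self]
  by_cases hz : z₀ ∈ s
  · have h1 : μ sᶜ = 0 :=
      measure_mono_null (Set.compl_subset_compl.mpr (Set.singleton_subset_iff.mpr hz)) hc0
    have h2 : μ s = 1 := by
      have hc := prob_compl_eq_one_sub (μ := μ) hs
      rw [h1] at hc
      exact le_antisymm prob_le_one (tsub_eq_zero_iff_le.mp hc.symm)
    rw [h2, Set.indicator_of_mem hz, Pi.one_apply]
  · have hsub : s ⊆ {z₀}ᶜ := fun x hx => by
      simp only [Set.mem_compl_iff, Set.mem_singleton_iff]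
      rintro rfl; exact hz hx
    rw [measure_mono_null hsub hc0, Set.indicator_of_notMem hz]

lemma iso_point_of_dirac (W : MSys) {z₀ : W.Z} (h : W.μ = Measure.dirac z₀) :
    IsIsoOf W pointSys := by
  refine ⟨fun _ => PUnit.unit, ⟨measurable_const, ?_⟩, ae_of_all _ fun z => rfl, ?_⟩
  · show W.μ.map (fun _ => PUnit.unit) = Measure.dirac PUnit.unit
    rw [Measure.map_const, measure_univ, one_smul]
  · refine ⟨fun _ => z₀, ⟨measurable_const, ?_⟩, ?_⟩
    · show (Measure.dirac PUnit.unit).map (fun _ => z₀) = W.μ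
      rw [Measure.map_const, measure_univ, one_smul, h]
    · show ∀ᵐ z ∂W.μ, z₀ = z
      rw [h, ae_iff]
      have : {z : W.Z | ¬ z₀ = z} = {z₀}ᶜ := by ext z; simp [eq_comm]
      rw [this, Measure.dirac_apply' _ (measurableSet_singleton _).compl]
      simp

lemma measurableSet_diag (Z : Type) [MeasurableSpace Z] [StandardBorelSpace Z] :
    MeasurableSet {p : Z × Z | p.1 = p.2} := by
  letI := upgradeStandardBorel Z
  exact isClosed_diagonal.measurableSet

/-- From a system not isomorphic to the point system, `F` contains a Bernoulli
identity system with parameter in `[1/2, 1)`. -/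
lemma exists_bern_param {F : MSys → Prop} (hF : IsCharacteristic F)
    (W : MSys) (hW : F W) (hni : ¬ IsIsoOf W pointSys) :
    ∃ (p : ℝ≥0∞) (hp : p ≤ 1), 2⁻¹ ≤ p ∧ p ≠ 1 ∧ F (bsys p hp) := by
  classical
  set μ := W.μ with hμdef
  haveI : IsProbabilityMeasure μ := W.prob
  set D : Set (W.Z × W.Z) := {x | x.1 = x.2} with hDdef
  have hD : MeasurableSet D := measurableSet_diag W.Z
  set a := (μ.prod μ) D with hadef
  have ha1 : a ≤ 1 := prob_le_one
  have hane : a ≠ 1 := by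
    intro h
    have hmeas : Measurable (fun z => μ {z}) := by
      have h2 : Measurable fun z => μ (Prod.mk z ⁻¹' D) := measurable_measure_prodMk_left hD
      convert h2 using 2 with z
      congr 1
      ext w
      simp [D, eq_comm]
    have hfub : ∫⁻ z, μ {z} ∂μ = 1 := by
      rw [← h, hadef, Measure.prod_apply hD]
      congr 1
      funext z
      congr 1
      ext w
      simp [D, eq_comm]
    have hsub : ∫⁻ z, ((1 : ℝ≥0∞) - μ {z}) ∂μ = 0 := by
      rw [lintegral_sub hmeas (by rw [hfub]; exact ENNReal.one_ne_top)
        (ae_of_all _ fun z => prob_le_one)]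
      rw [hfub, lintegral_one, measure_univ, tsub_self]
    have hae := (lintegral_eq_zero_iff (measurable_const.sub hmeas)).mp hsub
    have hae2 : ∀ᵐ z ∂μ, μ {z} = 1 := by
      refine hae.mono fun z hz => ?_
      have : (1 : ℝ≥0∞) - μ {z} = 0 := hz
      exact le_antisymm prob_le_one (tsub_eq_zero_iff_le.mp this)
    obtain ⟨z₀, hz₀⟩ := hae2.exists
    exact hni (iso_point_of_dirac W (eq_dirac_of μ hz₀))
  -- the self-joining ½(μ×μ) + ½Δ, spread over the ℕ-indexed product
  set Xi : ℕ → MSys := fun _ => W with hXidef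
  set J2 : W.Z × W.Z → (ℕ → W.Z) := fun x => fun i => if i = 0 then x.1 else x.2 with hJ2
  set Jd : W.Z → (ℕ → W.Z) := fun z => fun _ => z with hJd
  have hJ2m : Measurable J2 := by
    apply measurable_pi_lambda
    intro i
    show Measurable fun c : W.Z × W.Z => if i = 0 then c.1 else c.2
    split
    · exact measurable_fst
    · exact measurable_snd
  have hJdm : Measurable Jd := measurable_pi_lambda _ fun _ => measurable_id
  set ρ : Measure (ℕ → W.Z) := ((2:ℝ≥0∞)⁻¹) • (μ.prod μ).map J2 + ((2:ℝ≥0∞)⁻¹) • μ.map Jd with hρdef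
  haveI : IsProbabilityMeasure ((μ.prod μ).map J2) := Measure.isProbabilityMeasure_map hJ2m.aemeasurable
  haveI : IsProbabilityMeasure (μ.map Jd) := Measure.isProbabilityMeasure_map hJdm.aemeasurable
  have hTcoe : ⇑(prodMapSys Xi) = fun (x : ℕ → W.Z) i => W.T (x i) := rfl
  have hjoin : IsJoining Xi ρ := by
    refine ⟨?_, ?_, ?_⟩
    · constructor
      rw [hρdef]
      simp only [Measure.add_apply, Measure.smul_apply, smul_eq_mul, measure_univ]
      rw [mul_one, ENNReal.inv_two_add_inv_two]
    · refine ⟨(prodMapSys Xi).measurable, ?_⟩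
      have hTm : Measurable (fun (x : ℕ → W.Z) i => W.T (x i)) := by
        rw [← hTcoe]; exact (prodMapSys Xi).measurable
      show Measure.map (⇑(prodMapSys Xi)) ρ = ρ
      rw [hTcoe, hρdef, Measure.map_add _ _ hTm, Measure.map_smul, Measure.map_smul,
        Measure.map_map hTm hJ2m, Measure.map_map hTm hJdm]
      have e1 : ((fun (x : ℕ → W.Z) i => W.T (x i)) ∘ J2) = J2 ∘ Prod.map W.T W.T := by
        funext x
        funext i
        show W.T (if i = 0 then x.1 else x.2) = (if i = 0 then W.T x.1 else W.T x.2)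
        exact apply_ite W.T _ _ _
      have e2 : ((fun (x : ℕ → W.Z) i => W.T (x i)) ∘ Jd) = Jd ∘ W.T := rfl
      rw [e1, e2, ← Measure.map_map hJ2m (W.mp.prod W.mp).measurable,
        ← Measure.map_map hJdm W.T.measurable, (W.mp.prod W.mp).map_eq, W.mp.map_eq]
    · intro i
      show Measure.map (fun z : ℕ → W.Z => z i) ρ = μ
      rw [hρdef, Measure.map_add _ _ (measurable_pi_apply i), Measure.map_smul,
        Measure.map_smul, Measure.map_map (measurable_pi_apply i) hJ2m,
        Measure.map_map (measurable_pi_apply i) hJdm]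
      have e2 : ((fun z : ℕ → W.Z => z i) ∘ Jd) = id := rfl
      rw [e2, Measure.map_id]
      by_cases hi : i = 0
      · subst hi
        have e1 : ((fun z : ℕ → W.Z => z 0) ∘ J2) = Prod.fst := by funext x; simp [hJ2]
        rw [e1, Measure.map_fst_prod, measure_univ, one_smul, ← add_smul,
          ENNReal.inv_two_add_inv_two, one_smul]
      · have e1 : ((fun z : ℕ → W.Z => z i) ∘ J2) = Prod.snd := by funext x; simp [hJ2, hi]
        rw [e1, Measure.map_snd_prod, measure_univ, one_smul, ← add_smul,
          ENNReal.inv_two_add_inv_two, one_smul]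
  -- the invariant diagonal factor
  set p : ℝ≥0∞ := 2⁻¹ * a + 2⁻¹ with hpdef
  have hp1 : p ≤ 1 := by
    calc p ≤ 2⁻¹ * 1 + 2⁻¹ := add_le_add_left (mul_le_mul_right ha1 _) _
    _ = 1 := by rw [mul_one, ENNReal.inv_two_add_inv_two]
  have hphalf : 2⁻¹ ≤ p := le_add_self
  have hpne : p ≠ 1 := by
    have : p < 1 := by
      calc p < 2⁻¹ * 1 + 2⁻¹ := by
            refine ENNReal.add_lt_add_right (by simp) ?_
            exact (ENNReal.mul_lt_mul_iff_right (by simp) (by simp)).mpr (lt_of_le_of_ne ha1 hane)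
      _ = 1 := by rw [mul_one, ENNReal.inv_two_add_inv_two]
    exact this.ne
  refine ⟨p, hp1, hphalf, hpne, ?_⟩
  have hmem := hF.2.2 Xi (fun _ => hW) ρ hjoin
  apply hF.2.1 _ _ hmem
  set π₀ : (ℕ → W.Z) → Bool := fun x => decide (x 0 = x 1) with hπ₀
  have hpre : π₀ ⁻¹' {true} = (fun x : ℕ → W.Z => (x 0, x 1)) ⁻¹' D := by
    ext x; simp [hπ₀, D]
  have hpairm : Measurable (fun x : ℕ → W.Z => (x 0, x 1)) :=
    (measurable_pi_apply 0).prodMk (measurable_pi_apply 1)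
  have hπ₀m : Measurable π₀ := by
    apply measurable_to_countable'
    intro y
    cases y
    · have : π₀ ⁻¹' {false} = ((fun x : ℕ → W.Z => (x 0, x 1)) ⁻¹' D)ᶜ := by
        rw [← hpre]; ext x; simp [hπ₀]
      rw [this]
      exact (hpairm hD).compl
    · rw [hpre]; exact hpairm hD
  refine ⟨π₀, ⟨hπ₀m, ?_⟩, ?_⟩
  · show Measure.map π₀ ρ = bern p
    have hd2 : (π₀ ∘ J2) = fun x : W.Z × W.Z => decide (x.1 = x.2) := by
      funext x; simp [hπ₀, hJ2]
    have hdd : (π₀ ∘ Jd) = fun _ : W.Z => true := by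
      funext z; simp [hπ₀, hJd]
    have hdm : Measurable (fun x : W.Z × W.Z => decide (x.1 = x.2)) := by
      rw [← hd2]; exact hπ₀m.comp hJ2m
    rw [hρdef, Measure.map_add _ _ hπ₀m, Measure.map_smul, Measure.map_smul,
      Measure.map_map hπ₀m hJ2m, Measure.map_map hπ₀m hJdm, hd2, hdd,
      Measure.map_const, measure_univ, one_smul]
    apply Measure.ext_of_singleton
    intro x
    cases x
    · rw [Measure.add_apply, Measure.smul_apply, Measure.smul_apply, smul_eq_mul, smul_eq_mul,
        Measure.map_apply hdm (measurableSet_singleton _), bern_false]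
      have hprefalse : (fun x : W.Z × W.Z => decide (x.1 = x.2)) ⁻¹' {false} = Dᶜ := by
        ext x; simp [D]
      rw [hprefalse, prob_compl_eq_one_sub hD, ← hadef, Measure.dirac_apply]
      have hz : ({false} : Set Bool).indicator (1 : Bool → ℝ≥0∞) true = 0 := by simp
      rw [hz, mul_zero, add_zero, ENNReal.mul_sub (fun _ _ => by simp), mul_one, hpdef,
        add_comm ((2:ℝ≥0∞)⁻¹ * a) 2⁻¹, tsub_add_eq_tsub_tsub, one_sub_half]
    · rw [Measure.add_apply, Measure.smul_apply, Measure.smul_apply, smul_eq_mul, smul_eq_mul,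
        Measure.map_apply hdm (measurableSet_singleton _), bern_true]
      have hpretrue : (fun x : W.Z × W.Z => decide (x.1 = x.2)) ⁻¹' {true} = D := by
        ext x; simp [D]
      rw [hpretrue, ← hadef, Measure.dirac_apply]
      simp [hpdef]
  · apply ae_of_all
    intro z
    show π₀ ((prodMapSys Xi) z) = (MeasurableEquiv.refl Bool) (π₀ z)
    rw [hTcoe]
    show decide (W.T (z 0) = W.T (z 1)) = π₀ z
    rw [decide_eq_decide.mpr W.T.injective.eq_iff]

lemma uncount_cantor : ¬ Countable (ℕ → Bool) := by
  intro h
  have hinj : Function.Injective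
      (fun s : Set ℕ => fun n => @decide (n ∈ s) (Classical.propDecidable _)) := by
    intro s t hst
    ext n
    have := congrFun hst n
    rwa [decide_eq_decide] at this
  have h2 : Countable (Set ℕ) := Function.Injective.countable hinj
  obtain ⟨f, hf⟩ := (countable_iff_exists_injective (Set ℕ)).mp h2
  exact Function.cantor_injective f hf

/-- **ID is the smallest non-trivial characteristic class.** If a characteristic
class `F` contains a measure-theoretic dynamical system which is not isomorphic to
the one-point system, then `F` contains the identity automorphism of every
standard Borel probability space. -/
theorem identities_in_any_nontrivial_characteristic_class
    (F : MSys → Prop) (hF : IsCharacteristic F)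
    (hne : ∃ W : MSys, F W ∧ ¬ IsIsoOf W pointSys) :
    ∀ (Z : Type) [MeasurableSpace Z] [StandardBorelSpace Z]
      (μ : Measure Z) (hp : IsProbabilityMeasure μ), F (idSys Z μ hp) := by
  obtain ⟨W, hW, hni⟩ := hne
  obtain ⟨p, hp1, hphalf, hpne, hFp⟩ := exists_bern_param hF W hW hni
  have hq2 : (1 : ℝ≥0∞) - p ≤ 2⁻¹ := by
    rw [← one_sub_half]; exact tsub_le_tsub_left hphalf 1
  have hq0 : (1 : ℝ≥0∞) - p ≠ 0 := by
    rw [Ne, tsub_eq_zero_iff_le]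
    exact fun h => hpne (le_antisymm hp1 h)
  have hhalf : F (bsys 2⁻¹ half_le_one) := reach_half hF hq0 hq2 (bool_not hF hp1 hFp)
  intro Z mZ sbZ μZ hpZ
  haveI := hpZ
  have hZne : Nonempty Z := by
    by_contra h
    rw [not_nonempty_iff] at h
    have h0 : μZ Set.univ = 0 := by
      rw [Set.univ_eq_empty_iff.mpr h, measure_empty]
    rw [measure_univ] at h0
    exact one_ne_zero h0
  obtain ⟨e₀, he₀⟩ := exists_measurableEmbedding_real (α := Z)
  have hRuc : ¬ Countable ℝ := fun h => Cardinal.not_countable_real (@Set.countable_univ ℝ h)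
  let φ : ℝ ≃ᵐ (ℕ → Bool) := PolishSpace.measurableEquivOfNotCountable hRuc uncount_cantor
  let e : Z → (ℕ → Bool) := φ ∘ e₀
  have he : MeasurableEmbedding e := (φ.measurableEmbedding).comp he₀
  set ν : Measure (ℕ → Bool) := μZ.map e with hν
  haveI hνp : IsProbabilityMeasure ν := Measure.isProbabilityMeasure_map he.measurable.aemeasurable
  set ppar : ℕ → ℝ≥0∞ := fun i => ν {x | x i = true} with hppar
  have hpparle : ∀ i, ppar i ≤ 1 := fun i => prob_le_one
  set Xi : ℕ → MSys := fun i => bsys (ppar i) (hpparle i) with hXi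
  have hcoe : ⇑(prodMapSys Xi) = id := prodMapSys_bsys_coe ppar hpparle
  have hjoin : IsJoining Xi ν := by
    refine ⟨hνp, ⟨(prodMapSys Xi).measurable, ?_⟩, ?_⟩
    · show Measure.map (⇑(prodMapSys Xi)) ν = ν
      rw [hcoe]
      exact Measure.map_id
    · intro i
      show Measure.map (fun z : ℕ → Bool => z i) ν = bern (ppar i)
      rw [eq_bern (Measure.map (fun z : ℕ → Bool => z i) ν)
        (Measure.isProbabilityMeasure_map (measurable_pi_apply i).aemeasurable)]
      congr 1
      rw [Measure.map_apply (measurable_pi_apply i) (measurableSet_singleton _)]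
      rfl
  have hmem := hF.2.2 Xi (fun i => bool_all hF hhalf (hpparle i)) ν hjoin
  apply hF.2.1 _ _ hmem
  let r : (ℕ → Bool) → Z := Function.extend e id (fun _ => hZne.some)
  have hrm : Measurable r := he.measurable_extend measurable_id measurable_const
  have hre : ∀ z, r (e z) = z := fun z => he.injective.extend_apply _ _ z
  refine ⟨r, ⟨hrm, ?_⟩, ?_⟩
  · show Measure.map r ν = μZ
    rw [hν, Measure.map_map hrm he.measurable]
    have : r ∘ e = id := funext hre
    rw [this, Measure.map_id]
  · apply ae_of_all
    intro x
    show r ((prodMapSys Xi) x) = (MeasurableEquiv.refl Z) (r x)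
    rw [hcoe]
    rfl
end

section
/- Every automorphism of a standard Borel probability space is a measure-theoretic factor of some 2-fold self-joining of the infinite-entropy Bernoulli shift ([0,1]^ℤ, Leb^{⊗ℤ}, S), where S is the left shift. That is, for every automorphism R of a standard Borel probability space there exists a shift×shift-invariant measure ρ on [0,1]^ℤ × [0,1]^ℤ with both marginals equal to Leb^{⊗ℤ} such that R is isomorphic to a factor of the system ([0,1]^ℤ × [0,1]^ℤ, ρ, S × S). -/
open MeasureTheory Filter Topology
open scoped ENNReal

/-- The left shift on `α^ℤ`, as a measurable equivalence. -/
def shiftE (α : Type) [MeasurableSpace α] : (ℤ → α) ≃ᵐ (ℤ → α) where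
  toFun := fun v k => v (k + 1)
  invFun := fun v k => v (k - 1)
  left_inv := by intro v; funext k; simp
  right_inv := by intro v; funext k; simp
  measurable_toFun := measurable_pi_lambda _ (fun k => measurable_pi_apply (k + 1))
  measurable_invFun := measurable_pi_lambda _ (fun k => measurable_pi_apply (k - 1))

/-- The shift `S × S` on `[0,1]^ℤ × [0,1]^ℤ`. -/
def twoShiftE : ((ℤ → unitInterval) × (ℤ → unitInterval)) ≃ᵐ
    ((ℤ → unitInterval) × (ℤ → unitInterval)) :=
  (shiftE unitInterval).prodCongr (shiftE unitInterval)

/-- The system obtained from a 2-fold self-joining `ρ` of the Bernoulli shift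
`([0,1]^ℤ, Leb^{⊗ℤ}, S)`. -/
noncomputable def joinedBernoulliSys
    (ρ : Measure ((ℤ → unitInterval) × (ℤ → unitInterval)))
    (hρ : IsProbabilityMeasure ρ) (hinv : MeasurePreserving twoShiftE ρ ρ) : MSys :=
  { Z := (ℤ → unitInterval) × (ℤ → unitInterval), μ := ρ, prob := hρ,
    T := twoShiftE, mp := hinv }

/-! ### Auxiliary: circle arithmetic on the unit interval -/

open Set

noncomputable section CircleAux

instance factZeroLtOne : Fact ((0:ℝ) < 1) := ⟨zero_lt_one⟩

/-- Unit interval to circle. -/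
def qC : unitInterval → AddCircle (1:ℝ) := fun t => ((t : ℝ) : AddCircle (1:ℝ))

/-- Circle to unit interval, via representative in `[0,1)`. -/
def rC : AddCircle (1:ℝ) → unitInterval := fun a =>
  ⟨(AddCircle.equivIco 1 0 a : ℝ), by
    have h := (AddCircle.equivIco 1 0 a).2
    simp only [zero_add] at h
    exact Ico_subset_Icc_self h⟩

lemma measurable_qC : Measurable qC :=
  AddCircle.measurable_mk'.comp measurable_subtype_coe

lemma measurable_rC : Measurable rC :=
  (measurable_subtype_coe.comp (AddCircle.measurableEquivIco (1:ℝ) 0).measurable).subtype_mk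

lemma qC_rC (a : AddCircle (1:ℝ)) : qC (rC a) = a := by
  show ((AddCircle.equivIco 1 0 a : ℝ) : AddCircle (1:ℝ)) = a
  exact (AddCircle.equivIco 1 0).symm_apply_apply a

lemma rC_qC {t : unitInterval} (ht : (t:ℝ) < 1) : rC (qC t) = t := by
  ext
  show (AddCircle.equivIco 1 0 (((t:ℝ)) : AddCircle (1:ℝ)) : ℝ) = (t : ℝ)
  rw [AddCircle.coe_equivIco_mk_apply]
  rw [div_one, mul_one]
  exact Int.fract_eq_self.mpr ⟨t.2.1, ht⟩

lemma mp_qC : MeasurePreserving qC volume volume := by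
  refine ⟨measurable_qC, ?_⟩
  have h1 : (volume : Measure unitInterval).map Subtype.val
      = volume.restrict (Icc (0:ℝ) 1) := by
    rw [unitInterval.volume_def, map_comap_subtype_coe measurableSet_Icc]
  have h2 : volume.restrict (Icc (0:ℝ) 1) = volume.restrict (Ioc (0:ℝ) 1) :=
    (Measure.restrict_congr_set Ioc_ae_eq_Icc).symm
  have h3 := (AddCircle.measurePreserving_mk 1 0).map_eq
  rw [zero_add] at h3
  have : qC = (fun x : ℝ => (x : AddCircle (1:ℝ))) ∘ (Subtype.val : unitInterval → ℝ) := rfl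
  rw [this, ← Measure.map_map AddCircle.measurable_mk' measurable_subtype_coe, h1, h2, h3]

lemma vol_coe_one : (volume : Measure unitInterval) {t | ¬ ((t:ℝ) < 1)} = 0 := by
  have hset : {t : unitInterval | ¬ ((t:ℝ) < 1)} = {1} := by
    ext t
    simp only [mem_setOf_eq, not_lt, mem_singleton_iff]
    constructor
    · intro h; exact Subtype.ext (le_antisymm t.2.2 h)
    · rintro rfl; exact le_refl 1
  rw [hset, unitInterval.volume_def,
    comap_subtype_coe_apply measurableSet_Icc]
  simp

lemma mp_rC : MeasurePreserving rC volume volume := by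
  refine ⟨measurable_rC, ?_⟩
  rw [← mp_qC.map_eq, Measure.map_map measurable_rC measurable_qC]
  have hae : ∀ᵐ (t : unitInterval) ∂(volume : Measure unitInterval), (t:ℝ) < 1 := by
    rw [ae_iff]; exact vol_coe_one
  have : (rC ∘ qC) =ᵐ[(volume : Measure unitInterval)] id :=
    hae.mono fun t ht => (rC_qC ht : (rC ∘ qC) t = id t)
  rw [Measure.map_congr this, Measure.map_id]

/-- Addition mod 1 on the unit interval. -/
def addI (c t : unitInterval) : unitInterval := rC (qC c + qC t)

/-- Subtraction mod 1 on the unit interval. -/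
def subI (y x : unitInterval) : unitInterval := rC (qC y - qC x)

lemma measurable_addI2 : Measurable (fun p : unitInterval × unitInterval => addI p.1 p.2) :=
  measurable_rC.comp ((measurable_qC.comp measurable_fst).add (measurable_qC.comp measurable_snd))

lemma measurable_addI (c : unitInterval) : Measurable (addI c) :=
  measurable_addI2.comp (measurable_const.prodMk measurable_id)

lemma measurable_subI2 : Measurable (fun p : unitInterval × unitInterval => subI p.1 p.2) :=
  measurable_rC.comp ((measurable_qC.comp measurable_fst).sub (measurable_qC.comp measurable_snd))

lemma measurable_subI {α : Type*} [MeasurableSpace α] {u v : α → unitInterval}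
    (hu : Measurable u) (hv : Measurable v) : Measurable fun a => subI (u a) (v a) :=
  measurable_subI2.comp (hu.prodMk hv)

lemma measurable_addI' {α : Type*} [MeasurableSpace α] {u v : α → unitInterval}
    (hu : Measurable u) (hv : Measurable v) : Measurable fun a => addI (u a) (v a) :=
  measurable_addI2.comp (hu.prodMk hv)

lemma mp_addI (c : unitInterval) : MeasurePreserving (addI c) volume volume :=
  mp_rC.comp ((measurePreserving_add_left volume (qC c)).comp mp_qC)

lemma subI_addI {c : unitInterval} (x : unitInterval) (hc : (c:ℝ) < 1) :
    subI (addI c x) x = c := by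
  unfold subI addI
  rw [qC_rC, add_sub_cancel_right, rC_qC hc]

end CircleAux

/-! ### Auxiliary: uniqueness of measures via cylinder sets -/

section Cylinders

local notation "I" => unitInterval

lemma measurableSet_cyl (s : Finset ℤ) (A : ℤ → Set I) (hA : ∀ i, MeasurableSet (A i)) :
    MeasurableSet {x : ℤ → I | ∀ i ∈ s, x i ∈ A i} := by
  have : {x : ℤ → I | ∀ i ∈ s, x i ∈ A i} = ⋂ i ∈ s, (fun x : ℤ → I => x i) ⁻¹' (A i) := by
    ext x; simp
  rw [this]
  exact MeasurableSet.biInter s.countable_toSet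
    (fun i _ => (measurable_pi_apply i) (hA i))

/-- Two probability measures on `I^ℤ` agreeing on all box cylinders are equal. -/
lemma ext_cylinders (μ ν : Measure (ℤ → I)) [IsProbabilityMeasure μ] [IsProbabilityMeasure ν]
    (h : ∀ (s : Finset ℤ) (A : ℤ → Set I), (∀ i, MeasurableSet (A i)) →
      μ {x | ∀ i ∈ s, x i ∈ A i} = ν {x | ∀ i ∈ s, x i ∈ A i}) : μ = ν := by
  refine ext_of_generate_finite (measurableCylinders fun _ : ℤ => I)
    generateFrom_measurableCylinders.symm isPiSystem_measurableCylinders ?_ (by simp)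
  intro t ht
  rw [mem_measurableCylinders] at ht
  obtain ⟨s, S, hS, rfl⟩ := ht
  have hres : Measurable (s.restrict : (ℤ → I) → ((i : s) → I)) :=
    measurable_pi_lambda _ (fun i => measurable_pi_apply (i : ℤ))
  have hkey : μ.map s.restrict = ν.map s.restrict := by
    have h1 : IsProbabilityMeasure (μ.map s.restrict) :=
      Measure.isProbabilityMeasure_map hres.aemeasurable
    have h2 : IsProbabilityMeasure (ν.map s.restrict) :=
      Measure.isProbabilityMeasure_map hres.aemeasurable
    refine ext_of_generate_finite _ generateFrom_pi.symm isPiSystem_pi ?_ (by simp)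
    rintro B ⟨A', hA', rfl⟩
    classical
    set A : ℤ → Set I := fun i => if hi : i ∈ s then A' ⟨i, hi⟩ else univ with hAdef
    have hAm : ∀ i, MeasurableSet (A i) := by
      intro i
      by_cases hi : i ∈ s
      · simpa [hAdef, hi] using hA' ⟨i, hi⟩ (mem_univ _)
      · simp [hAdef, hi]
    have hpre : ∀ κ : Measure (ℤ → I),
        κ.map s.restrict (univ.pi A') = κ {x | ∀ i ∈ s, x i ∈ A i} := by
      intro κ
      rw [Measure.map_apply hres (MeasurableSet.univ_pi
        (fun i => hA' i (mem_univ _)))]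
      congr 1
      ext x
      simp only [mem_preimage, mem_univ_pi, Finset.restrict, mem_setOf_eq]
      constructor
      · intro hx i hi
        simpa [hAdef, hi] using hx ⟨i, hi⟩
      · intro hx i
        simpa [hAdef, i.2] using hx i i.2
    rw [hpre μ, hpre ν, h s A hAm]
  -- now conclude for the cylinder
  calc μ (cylinder s S) = μ.map s.restrict S := (Measure.map_apply hres hS).symm
    _ = ν.map s.restrict S := by rw [hkey]
    _ = ν (cylinder s S) := Measure.map_apply hres hS

variable (lam : Measure (ℤ → I)) (hprob : IsProbabilityMeasure lam)
  (hprod : ∀ (s : Finset ℤ) (A : ℤ → Set I), (∀ i, MeasurableSet (A i)) →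
      lam {x | ∀ i ∈ s, x i ∈ A i} = ∏ i ∈ s, volume (A i))

include hprob hprod

/-- The shift preserves the product measure. -/
lemma mp_shift : MeasurePreserving (shiftE I) lam lam := by
  haveI := hprob
  refine ⟨(shiftE I).measurable, ?_⟩
  haveI : IsProbabilityMeasure (lam.map (shiftE I)) :=
    Measure.isProbabilityMeasure_map (shiftE I).measurable.aemeasurable
  refine ext_cylinders _ _ (fun s A hA => ?_)
  rw [Measure.map_apply (shiftE I).measurable (measurableSet_cyl s A hA)]
  have hset : (shiftE I) ⁻¹' {x | ∀ i ∈ s, x i ∈ A i}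
      = {x : ℤ → I | ∀ j ∈ s.image (· + 1), x j ∈ A (j - 1)} := by
    ext x
    simp only [mem_preimage, mem_setOf_eq, Finset.mem_image]
    constructor
    · rintro hx j ⟨i, hi, rfl⟩
      show x (i + 1) ∈ A (i + 1 - 1)
      rw [add_sub_cancel_right]; exact hx i hi
    · intro hx i hi
      have := hx (i + 1) ⟨i, hi, rfl⟩
      exact (by simpa [add_sub_cancel_right] using this : x (i + 1) ∈ A i)
  rw [hset, hprod (s.image (· + 1)) (fun j => A (j - 1)) (fun j => hA (j - 1)),
    Finset.prod_image (fun a _ b _ hab => by omega), hprod s A hA]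
  simp [add_sub_cancel_right]

/-- Coordinatewise rotation preserves the product measure. -/
lemma mp_trans (c : ℤ → I) :
    MeasurePreserving (fun x : ℤ → I => fun n => addI (c n) (x n)) lam lam := by
  haveI := hprob
  have hF : Measurable (fun x : ℤ → I => fun n => addI (c n) (x n)) :=
    measurable_pi_lambda _ (fun n => (measurable_addI (c n)).comp (measurable_pi_apply n))
  refine ⟨hF, ?_⟩
  haveI : IsProbabilityMeasure (lam.map (fun x : ℤ → I => fun n => addI (c n) (x n))) :=
    Measure.isProbabilityMeasure_map hF.aemeasurable
  refine ext_cylinders _ _ (fun s A hA => ?_)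
  rw [Measure.map_apply hF (measurableSet_cyl s A hA)]
  have hset : (fun x : ℤ → I => fun n => addI (c n) (x n)) ⁻¹' {x | ∀ i ∈ s, x i ∈ A i}
      = {x : ℤ → I | ∀ i ∈ s, x i ∈ addI (c i) ⁻¹' (A i)} := by
    ext x; simp
  rw [hset, hprod s _ (fun i => (measurable_addI (c i)) (hA i)), hprod s A hA]
  refine Finset.prod_congr rfl (fun i _ => ?_)
  exact (mp_addI (c i)).measure_preimage (hA i).nullMeasurableSet

end Cylinders


set_option maxHeartbeats 1600000 in
/-- **Every automorphism of a standard Borel probability space is a factor of a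
2-fold self-joining of the infinite-entropy Bernoulli shift `([0,1]^ℤ, Leb^{⊗ℤ}, S)`.**
Here `lam` is the product measure `Leb^{⊗ℤ}` on `[0,1]^ℤ`, characterized by its
values on cylinder sets. -/
theorem factor_of_self_joining_of_bernoulli
    (lam : Measure (ℤ → unitInterval)) (hprob : IsProbabilityMeasure lam)
    (hprod : ∀ (s : Finset ℤ) (A : ℤ → Set unitInterval), (∀ i, MeasurableSet (A i)) →
      lam {x | ∀ i ∈ s, x i ∈ A i} = ∏ i ∈ s, volume (A i))
    (R : MSys) :
    ∃ (ρ : Measure ((ℤ → unitInterval) × (ℤ → unitInterval)))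
      (hρ : IsProbabilityMeasure ρ) (hinv : MeasurePreserving twoShiftE ρ ρ),
      ρ.map Prod.fst = lam ∧ ρ.map Prod.snd = lam ∧
      IsFactorOf R (joinedBernoulliSys ρ hρ hinv) := by
  classical
  haveI := hprob
  -- a measurable injection `emb` of `R.Z` into `[0,1)` with measurable left inverse `g`
  obtain ⟨f, hf⟩ := exists_measurableEmbedding_real R.Z
  have hπ : (0:ℝ) < Real.pi := Real.pi_pos
  have harct : ∀ z, -(1/2) < Real.arctan (f z) / Real.pi ∧
      Real.arctan (f z) / Real.pi < 1/2 := by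
    intro z
    have h1 := Real.arctan_lt_pi_div_two (f z)
    have h2 := Real.neg_pi_div_two_lt_arctan (f z)
    constructor
    · rw [lt_div_iff₀ hπ]; linarith
    · rw [div_lt_iff₀ hπ]; linarith
  have hmem : ∀ z, Real.arctan (f z) / Real.pi + 1/2 ∈ unitInterval := fun z =>
    Set.mem_Icc.mpr ⟨by linarith [(harct z).1], by linarith [(harct z).2]⟩
  set emb : R.Z → unitInterval := fun z => ⟨Real.arctan (f z) / Real.pi + 1/2, hmem z⟩
    with hembdef
  have hemb_meas : Measurable emb :=
    (((Real.measurable_arctan.comp hf.measurable).div_const _).add_const _).subtype_mk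
  have hemb_lt : ∀ z, ((emb z : ℝ)) < 1 := by
    intro z
    show Real.arctan (f z) / Real.pi + 1/2 < 1
    linarith [(harct z).2]
  have hmtan : Measurable Real.tan := by
    have h : Real.tan = fun x => Real.sin x / Real.cos x := funext Real.tan_eq_sin_div_cos
    rw [h]; exact Real.measurable_sin.div Real.measurable_cos
  set tanv : unitInterval → ℝ := fun u => Real.tan (Real.pi * ((u:ℝ) - 1/2)) with htanvdef
  have htanv_meas : Measurable tanv :=
    hmtan.comp ((measurable_subtype_coe.sub_const _).const_mul _)
  have htanv_emb : ∀ z, tanv (emb z) = f z := by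
    intro z
    show Real.tan (Real.pi * ((Real.arctan (f z) / Real.pi + 1/2) - 1/2)) = f z
    have h : Real.pi * ((Real.arctan (f z) / Real.pi + 1/2) - 1/2)
        = Real.arctan (f z) := by field_simp; ring
    rw [h, Real.tan_arctan]
  have hne : Nonempty R.Z := by
    by_contra hcon
    rw [not_nonempty_iff] at hcon
    have h1 : R.μ Set.univ = 1 := measure_univ
    rw [Set.univ_eq_empty_iff.mpr hcon, measure_empty] at h1
    exact zero_ne_one h1
  set g : unitInterval → R.Z := fun u =>
    if hu : u ∈ tanv ⁻¹' (Set.range f) then Set.rangeSplitting f ⟨tanv u, hu⟩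
    else hne.some with hgdef
  have hg_meas : Measurable g := by
    have hs : MeasurableSet (tanv ⁻¹' (Set.range f)) := htanv_meas hf.measurableSet_range
    have hF : Measurable fun x : (tanv ⁻¹' (Set.range f) : Set unitInterval) =>
        Set.rangeSplitting f ⟨tanv x.1, x.2⟩ :=
      hf.measurable_rangeSplitting.comp ((htanv_meas.comp measurable_subtype_coe).subtype_mk)
    have hC : Measurable fun _ : ((tanv ⁻¹' (Set.range f))ᶜ : Set unitInterval) => hne.some :=
      measurable_const
    exact Measurable.dite hF hC hs
  have hg_emb : ∀ z, g (emb z) = z := by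
    intro z
    have hmem' : emb z ∈ tanv ⁻¹' (Set.range f) := by
      simp only [Set.mem_preimage, htanv_emb z]
      exact Set.mem_range_self z
    rw [hgdef]
    dsimp only
    rw [dif_pos hmem']
    apply hf.injective
    rw [Set.apply_rangeSplitting f]
    simp [htanv_emb z]
  -- measurable iterates of the automorphism
  set P : Equiv.Perm R.Z := R.T.toEquiv with hPdef
  have hPapp : ∀ z, P z = R.T z := fun _ => rfl
  have hPm : ∀ n : ℤ, Measurable fun z => (P ^ n) z := by
    intro n
    induction n using Int.induction_on with
    | zero => simpa using measurable_id'
    | succ k ih =>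
        have hfun : (fun z => (P ^ ((k:ℤ)+1)) z) = fun z => (P ^ (k:ℤ)) (R.T z) := by
          funext z
          rw [zpow_add_one]
          rfl
        rw [hfun]; exact ih.comp R.T.measurable
    | pred k ih =>
        have hfun : (fun z => (P ^ (-(k:ℤ)-1)) z) = fun z => (P ^ (-(k:ℤ))) (R.T.symm z) := by
          funext z
          rw [zpow_sub_one]
          rfl
        rw [hfun]; exact ih.comp R.T.symm.measurable
  -- the itinerary map
  set c : R.Z → ℤ → unitInterval := fun z n => emb ((P ^ n) z) with hcdef
  have hc_shift : ∀ z n, c (R.T z) n = c z (n+1) := by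
    intro z n
    show emb ((P ^ n) (R.T z)) = emb ((P ^ (n+1)) z)
    congr 1
    rw [zpow_add_one]
    rfl
  have hc_zero : ∀ z, c z 0 = emb z := by
    intro z
    show emb ((P ^ (0:ℤ)) z) = emb z
    rw [zpow_zero]
    rfl
  -- the skew-product coding map
  set Θ : (ℤ → unitInterval) × R.Z → (ℤ → unitInterval) × (ℤ → unitInterval) :=
    fun p => (p.1, fun n => addI (c p.2 n) (p.1 n)) with hΘdef
  have hΘ_meas : Measurable Θ := by
    refine measurable_fst.prodMk (measurable_pi_lambda _ (fun n => ?_))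
    exact measurable_addI2.comp
      (((hemb_meas.comp (hPm n)).comp measurable_snd).prodMk
        ((measurable_pi_apply n).comp measurable_fst))
  set m : Measure ((ℤ → unitInterval) × R.Z) := lam.prod R.μ with hmdef
  haveI : IsProbabilityMeasure m := by
    rw [hmdef]; infer_instance
  have hρprob : IsProbabilityMeasure (m.map Θ) :=
    Measure.isProbabilityMeasure_map hΘ_meas.aemeasurable
  -- shift-equivariance of the coding map
  have hshift : MeasurePreserving (shiftE unitInterval) lam lam := mp_shift lam hprob hprod
  have hcomm : ∀ p, twoShiftE (Θ p) = Θ (Prod.map (shiftE unitInterval) R.T p) := by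
    intro p
    refine Prod.ext rfl ?_
    funext n
    show addI (c p.2 (n+1)) (p.1 (n+1)) = addI (c (R.T p.2) n) (p.1 (n+1))
    rw [hc_shift]
  have hσ : MeasurePreserving (Prod.map (shiftE unitInterval) R.T) m m := hshift.prod R.mp
  have hinv : MeasurePreserving twoShiftE (m.map Θ) (m.map Θ) := by
    refine ⟨twoShiftE.measurable, ?_⟩
    rw [Measure.map_map twoShiftE.measurable hΘ_meas]
    have h : (twoShiftE ∘ Θ) = Θ ∘ (Prod.map (shiftE unitInterval) R.T) := funext hcomm
    rw [h, ← Measure.map_map hΘ_meas hσ.measurable, hσ.map_eq]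
  -- first marginal
  have hfst : (m.map Θ).map Prod.fst = lam := by
    rw [Measure.map_map measurable_fst hΘ_meas]
    have h : (Prod.fst ∘ Θ) = (Prod.fst : (ℤ → unitInterval) × R.Z → (ℤ → unitInterval)) := rfl
    rw [h, hmdef, Measure.map_fst_prod, measure_univ, one_smul]
  -- second marginal
  have hsnd : (m.map Θ).map Prod.snd = lam := by
    rw [Measure.map_map measurable_snd hΘ_meas]
    refine Measure.ext (fun B hB => ?_)
    rw [Measure.map_apply (measurable_snd.comp hΘ_meas) hB, hmdef,
      Measure.prod_apply_symm ((measurable_snd.comp hΘ_meas) hB)]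
    have hstep : lintegral R.μ (fun z => lam ((fun x => (x, z)) ⁻¹' ((Prod.snd ∘ Θ) ⁻¹' B)))
        = lintegral R.μ (fun _ => lam B) := by
      refine lintegral_congr (fun z => ?_)
      have hslice : (fun x => (x, z)) ⁻¹' ((Prod.snd ∘ Θ) ⁻¹' B)
          = (fun x : ℤ → unitInterval => fun n => addI (c z n) (x n)) ⁻¹' B := rfl
      rw [hslice]
      exact (mp_trans lam hprob hprod (c z)).measure_preimage hB.nullMeasurableSet
    rw [hstep, lintegral_const, measure_univ, mul_one]
  -- the factor map
  set pr : (ℤ → unitInterval) × (ℤ → unitInterval) → R.Z :=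
    fun p => g (subI (p.2 0) (p.1 0)) with hprdef
  have hsub0 : Measurable fun p : (ℤ → unitInterval) × (ℤ → unitInterval) =>
      subI (p.2 0) (p.1 0) :=
    measurable_subI (measurable_snd.eval) (measurable_fst.eval)
  have hpr_meas : Measurable pr := hg_meas.comp hsub0
  have hkey : ∀ p : (ℤ → unitInterval) × R.Z, pr (Θ p) = p.2 := by
    intro p
    show g (subI (addI (c p.2 0) (p.1 0)) (p.1 0)) = p.2
    have hlt : ((c p.2 0 : ℝ)) < 1 := by rw [hc_zero]; exact hemb_lt _
    rw [subI_addI _ hlt, hc_zero, hg_emb]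
  have hmp : MeasurePreserving pr (m.map Θ) R.μ := by
    refine ⟨hpr_meas, ?_⟩
    rw [Measure.map_map hpr_meas hΘ_meas]
    have h : (pr ∘ Θ) = (Prod.snd : (ℤ → unitInterval) × R.Z → R.Z) := funext hkey
    rw [h, hmdef, Measure.map_snd_prod, measure_univ, one_smul]
  -- a.e. equivariance of the factor map
  letI := upgradeStandardBorel R.Z
  have hEset : MeasurableSet {p : (ℤ → unitInterval) × (ℤ → unitInterval) |
      pr (twoShiftE p) = R.T (pr p)} :=
    ((hpr_meas.comp twoShiftE.measurable).stronglyMeasurable).measurableSet_eq_fun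
      ((R.T.measurable.comp hpr_meas).stronglyMeasurable)
  have hae : ∀ᵐ p ∂(m.map Θ), pr (twoShiftE p) = R.T (pr p) := by
    rw [ae_map_iff hΘ_meas.aemeasurable hEset]
    refine Filter.Eventually.of_forall (fun p => ?_)
    show pr (twoShiftE (Θ p)) = R.T (pr (Θ p))
    rw [hcomm p, hkey, hkey]
    rfl
  exact ⟨m.map Θ, hρprob, hinv, hfst, hsnd, pr, hmp, hae⟩
end

section
/- Let (N_ℓ) be an increasing sequence of positive integers, k ∈ ℕ, and let a, b₁, …, b_k : ℕ → ℂ be sequences bounded by 1. Assume that lim_{H→∞} limsup_{ℓ→∞} (1/H) Σ_{h≤H} (1/N_ℓ) |Σ_{n≤N_ℓ} a(n)·conj(a(n+h))| = 0. Then lim_{H→∞} limsup_{ℓ→∞} (1/H^k) Σ_{h₁,…,h_k ≤ H} (1/N_ℓ) |Σ_{n≤N_ℓ} a(n) Π_{i=1}^{k} b_i(n+h_i)| = 0. -/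
/- NOTE: structures with instance-implicit fields must be declared before
`open MeasureTheory` (the latter's notations clash with `[...]` fields). -/
open MeasureTheory Filter Topology
open scoped ENNReal

namespace AvgCorrAux
local notation "conj'" => starRingEnd ℂ

lemma norm_sum_le_card (C : Finset ℕ) (f : ℕ → ℂ) (hf : ∀ n, ‖f n‖ ≤ 1) :
    ‖∑ n ∈ C, f n‖ ≤ (C.card : ℝ) := by
  calc ‖∑ n ∈ C, f n‖ ≤ ∑ n ∈ C, ‖f n‖ := norm_sum_le _ _
    _ ≤ ∑ _n ∈ C, (1:ℝ) := Finset.sum_le_sum fun n _ => hf n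
    _ = C.card := by simp

lemma norm_sum_sub_sum_le (A B : Finset ℕ) (f : ℕ → ℂ) (hf : ∀ n, ‖f n‖ ≤ 1) :
    ‖∑ n ∈ A, f n - ∑ n ∈ B, f n‖ ≤ ((A \ B).card : ℝ) + ((B \ A).card : ℝ) := by
  rw [← Finset.sum_sdiff_sub_sum_sdiff]
  exact (norm_sub_le _ _).trans (add_le_add (norm_sum_le_card _ f hf) (norm_sum_le_card _ f hf))

lemma shift_sum_close (f : ℕ → ℂ) (hf : ∀ n, ‖f n‖ ≤ 1) (N s : ℕ) :
    ‖∑ n ∈ Finset.Icc 1 N, f (n + s) - ∑ n ∈ Finset.Icc 1 N, f n‖ ≤ 2 * (s:ℝ) := by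
  have h1 : ∑ n ∈ Finset.Icc 1 N, f (n + s) = ∑ m ∈ Finset.Icc (1 + s) (N + s), f m := by
    rw [← Finset.map_add_right_Icc, Finset.sum_map]
    rfl
  rw [h1]
  have h2 := norm_sum_sub_sum_le (Finset.Icc (1+s) (N+s)) (Finset.Icc 1 N) f hf
  have c1 : ((Finset.Icc (1+s) (N+s) \ Finset.Icc 1 N).card : ℝ) ≤ s := by
    have hsub : Finset.Icc (1+s) (N+s) \ Finset.Icc 1 N ⊆ Finset.Icc (N+1) (N+s) := by
      intro m hm
      simp only [Finset.mem_sdiff, Finset.mem_Icc, not_and, not_le] at hm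
      simp only [Finset.mem_Icc]
      omega
    have := Finset.card_le_card hsub
    have hc : (Finset.Icc (N+1) (N+s)).card = s := by rw [Nat.card_Icc]; omega
    exact_mod_cast hc ▸ this
  have c2 : ((Finset.Icc 1 N \ Finset.Icc (1+s) (N+s)).card : ℝ) ≤ s := by
    have hsub : Finset.Icc 1 N \ Finset.Icc (1+s) (N+s) ⊆ Finset.Icc 1 s := by
      intro m hm
      simp only [Finset.mem_sdiff, Finset.mem_Icc, not_and, not_le] at hm
      simp only [Finset.mem_Icc]
      omega
    have := Finset.card_le_card hsub
    have hc : (Finset.Icc 1 s).card = s := by rw [Nat.card_Icc]; omega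
    exact_mod_cast hc ▸ this
  linarith


lemma phase_cs (a : ℕ → ℂ) (u : ℕ → ℂ) (hu : ∀ n, ‖u n‖ ≤ 1) (N H : ℕ) :
    ∑ s ∈ Finset.Icc 1 H, ‖∑ n ∈ Finset.Icc 1 N, a (n + s) * u n‖ ≤
      Real.sqrt ((N : ℝ) * ∑ s ∈ Finset.Icc 1 H, ∑ t ∈ Finset.Icc 1 H,
        ‖∑ n ∈ Finset.Icc 1 N, a (n + s) * conj' (a (n + t))‖) := by
  set S : ℕ → ℂ := fun s => ∑ n ∈ Finset.Icc 1 N, a (n + s) * u n with hSdef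
  set ε : ℕ → ℂ := fun s => conj' (S s) / (‖S s‖ : ℂ) with hεdef
  have hεS : ∀ s, ε s * S s = ((‖S s‖ : ℝ) : ℂ) := by
    intro s
    by_cases h : S s = 0
    · simp [hεdef, h]
    · have hne : ((‖S s‖ : ℝ) : ℂ) ≠ 0 :=
        Complex.ofReal_ne_zero.mpr (norm_ne_zero_iff.mpr h)
      show conj' (S s) / (‖S s‖ : ℂ) * S s = _
      rw [div_mul_eq_mul_div, mul_comm (conj' (S s)) (S s), Complex.mul_conj',
        sq, mul_div_assoc, div_self hne, mul_one]
  have hε1 : ∀ s, ‖ε s‖ ≤ 1 := by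
    intro s
    by_cases h : S s = 0
    · simp [hεdef, h]
    · rw [hεdef]
      simp only [norm_div, RCLike.norm_conj, Complex.norm_real, norm_norm]
      rw [div_self (norm_ne_zero_iff.mpr h)]
  set w : ℕ → ℂ := fun n => ∑ s ∈ Finset.Icc 1 H, ε s * a (n + s) with hwdef
  have key : ((∑ s ∈ Finset.Icc 1 H, ‖S s‖ : ℝ) : ℂ) = ∑ n ∈ Finset.Icc 1 N, w n * u n := by
    push_cast
    rw [Finset.sum_congr rfl (fun s _ => (hεS s).symm)]
    simp only [hSdef, hwdef, Finset.mul_sum, Finset.sum_mul]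
    rw [Finset.sum_comm]
    exact Finset.sum_congr rfl fun n _ => Finset.sum_congr rfl fun s _ => by ring
  have h1 : ∑ s ∈ Finset.Icc 1 H, ‖S s‖ ≤ ∑ n ∈ Finset.Icc 1 N, ‖w n‖ := by
    have heq : ∑ s ∈ Finset.Icc 1 H, ‖S s‖ =
        ‖((∑ s ∈ Finset.Icc 1 H, ‖S s‖ : ℝ) : ℂ)‖ := by
      rw [Complex.norm_real,
        Real.norm_of_nonneg (Finset.sum_nonneg fun s _ => norm_nonneg _)]
    rw [heq, key]
    calc ‖∑ n ∈ Finset.Icc 1 N, w n * u n‖ ≤ ∑ n ∈ Finset.Icc 1 N, ‖w n * u n‖ :=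
        norm_sum_le _ _
      _ ≤ ∑ n ∈ Finset.Icc 1 N, ‖w n‖ := Finset.sum_le_sum fun n _ => by
          rw [norm_mul]
          exact mul_le_of_le_one_right (norm_nonneg _) (hu n)
  have h2 : (∑ n ∈ Finset.Icc 1 N, ‖w n‖) ^ 2 ≤ (N : ℝ) * ∑ n ∈ Finset.Icc 1 N, ‖w n‖ ^ 2 := by
    have h := Finset.sum_mul_sq_le_sq_mul_sq (Finset.Icc 1 N) (fun _ => (1:ℝ))
      (fun n => ‖w n‖)
    simp only [one_mul, one_pow, Finset.sum_const, Nat.card_Icc, nsmul_eq_mul,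
      Nat.add_sub_cancel, mul_one] at h
    exact_mod_cast h
  have expand : ∀ n, w n * conj' (w n) = ∑ s ∈ Finset.Icc 1 H, ∑ t ∈ Finset.Icc 1 H,
      (ε s * conj' (ε t)) * (a (n + s) * conj' (a (n + t))) := by
    intro n
    rw [show conj' (w n) = ∑ t ∈ Finset.Icc 1 H, conj' (ε t * a (n + t)) from map_sum _ _ _]
    rw [Finset.sum_mul_sum]
    exact Finset.sum_congr rfl fun s _ => Finset.sum_congr rfl fun t _ => by
      rw [map_mul]; ring
  have hw : ((∑ n ∈ Finset.Icc 1 N, ‖w n‖ ^ 2 : ℝ) : ℂ) =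
      ∑ s ∈ Finset.Icc 1 H, ∑ t ∈ Finset.Icc 1 H,
        (ε s * conj' (ε t)) * ∑ n ∈ Finset.Icc 1 N, a (n + s) * conj' (a (n + t)) := by
    push_cast
    rw [Finset.sum_congr rfl (fun n (_ : n ∈ Finset.Icc 1 N) => (Complex.mul_conj' (w n)).symm)]
    rw [Finset.sum_congr rfl fun n _ => expand n]
    rw [Finset.sum_comm]
    refine Finset.sum_congr rfl fun s _ => ?_
    rw [Finset.sum_comm]
    exact Finset.sum_congr rfl fun t _ => (Finset.mul_sum _ _ _).symm
  have h3 : ∑ n ∈ Finset.Icc 1 N, ‖w n‖ ^ 2 ≤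
      ∑ s ∈ Finset.Icc 1 H, ∑ t ∈ Finset.Icc 1 H,
        ‖∑ n ∈ Finset.Icc 1 N, a (n + s) * conj' (a (n + t))‖ := by
    have heq : ∑ n ∈ Finset.Icc 1 N, ‖w n‖ ^ 2 =
        ‖((∑ n ∈ Finset.Icc 1 N, ‖w n‖ ^ 2 : ℝ) : ℂ)‖ := by
      rw [Complex.norm_real,
        Real.norm_of_nonneg (Finset.sum_nonneg fun n _ => sq_nonneg _)]
    rw [heq, hw]
    refine ((norm_sum_le _ _).trans (Finset.sum_le_sum fun s _ => norm_sum_le _ _)).trans ?_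
    refine Finset.sum_le_sum fun s _ => Finset.sum_le_sum fun t _ => ?_
    rw [norm_mul, norm_mul, RCLike.norm_conj]
    calc ‖ε s‖ * ‖ε t‖ * ‖∑ n ∈ Finset.Icc 1 N, a (n + s) * conj' (a (n + t))‖
        ≤ 1 * 1 * ‖∑ n ∈ Finset.Icc 1 N, a (n + s) * conj' (a (n + t))‖ := by
          gcongr
          · exact hε1 s
          · exact hε1 t
      _ = _ := by ring
  have hQnn : (0:ℝ) ≤ (N : ℝ) * ∑ s ∈ Finset.Icc 1 H, ∑ t ∈ Finset.Icc 1 H,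
      ‖∑ n ∈ Finset.Icc 1 N, a (n + s) * conj' (a (n + t))‖ :=
    mul_nonneg (Nat.cast_nonneg _) (Finset.sum_nonneg fun s _ =>
      Finset.sum_nonneg fun t _ => norm_nonneg _)
  rw [Real.le_sqrt (Finset.sum_nonneg fun s _ => norm_nonneg _) hQnn]
  calc (∑ s ∈ Finset.Icc 1 H, ‖S s‖) ^ 2 ≤ (∑ n ∈ Finset.Icc 1 N, ‖w n‖) ^ 2 :=
      pow_le_pow_left₀ (Finset.sum_nonneg fun s _ => norm_nonneg _) h1 2
    _ ≤ (N : ℝ) * ∑ n ∈ Finset.Icc 1 N, ‖w n‖ ^ 2 := h2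
    _ ≤ _ := mul_le_mul_of_nonneg_left h3 (Nat.cast_nonneg _)


lemma norm_sum_le_card' (C : Finset ℕ) (f : ℕ → ℂ) (hf : ∀ n, ‖f n‖ ≤ 1) :
    ‖∑ n ∈ C, f n‖ ≤ (C.card : ℝ) := by
  calc ‖∑ n ∈ C, f n‖ ≤ ∑ n ∈ C, ‖f n‖ := norm_sum_le _ _
    _ ≤ ∑ _n ∈ C, (1:ℝ) := Finset.sum_le_sum fun n _ => hf n
    _ = C.card := by simp

lemma corr_prod_bd (a : ℕ → ℂ) (ha : ∀ n, ‖a n‖ ≤ 1) (s t n : ℕ) :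
    ‖a (n + s) * conj' (a (n + t))‖ ≤ 1 := by
  rw [norm_mul, RCLike.norm_conj]
  exact mul_le_one₀ (ha _) (norm_nonneg _) (ha _)

lemma corr_symm (a : ℕ → ℂ) (N s t : ℕ) :
    ‖∑ n ∈ Finset.Icc 1 N, a (n + s) * conj' (a (n + t))‖ =
    ‖∑ n ∈ Finset.Icc 1 N, a (n + t) * conj' (a (n + s))‖ := by
  rw [← RCLike.norm_conj (∑ n ∈ Finset.Icc 1 N, a (n + s) * conj' (a (n + t)))]
  rw [map_sum]
  congr 1
  refine Finset.sum_congr rfl fun n _ => ?_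
  rw [map_mul, RCLike.conj_conj]
  ring

lemma corr_shift (a : ℕ → ℂ) (ha : ∀ n, ‖a n‖ ≤ 1) (N H s t : ℕ)
    (hs : 1 ≤ s) (hsH : s ≤ H) (hst : s < t) :
    ‖∑ n ∈ Finset.Icc 1 N, a (n + s) * conj' (a (n + t))‖ ≤
      ‖∑ n ∈ Finset.Icc 1 N, a n * conj' (a (n + (t - s)))‖ + 2 * H := by
  set f : ℕ → ℂ := fun m => a m * conj' (a (m + (t - s))) with hfdef
  have hf : ∀ m, ‖f m‖ ≤ 1 := by
    intro m
    rw [hfdef]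
    simp only
    rw [norm_mul, RCLike.norm_conj]
    exact mul_le_one₀ (ha _) (norm_nonneg _) (ha _)
  have heq : ∀ n, a (n + s) * conj' (a (n + t)) = f (n + s) := by
    intro n
    have h' : n + s + (t - s) = n + t := by omega
    simp only [hfdef, h']
  rw [Finset.sum_congr rfl fun n _ => heq n]
  have hclose : ‖∑ n ∈ Finset.Icc 1 N, f (n + s) - ∑ n ∈ Finset.Icc 1 N, f n‖ ≤ 2 * (s:ℝ) :=
    shift_sum_close f hf N s
  calc ‖∑ n ∈ Finset.Icc 1 N, f (n + s)‖
      ≤ ‖∑ n ∈ Finset.Icc 1 N, f n‖ +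
        ‖∑ n ∈ Finset.Icc 1 N, f (n + s) - ∑ n ∈ Finset.Icc 1 N, f n‖ := by
        have := norm_add_le (∑ n ∈ Finset.Icc 1 N, f n)
          (∑ n ∈ Finset.Icc 1 N, f (n + s) - ∑ n ∈ Finset.Icc 1 N, f n)
        simpa using this
    _ ≤ ‖∑ n ∈ Finset.Icc 1 N, f n‖ + 2 * H := by
        refine add_le_add le_rfl (hclose.trans ?_)
        have hsr : (s:ℝ) ≤ H := by exact_mod_cast hsH
        linarith

lemma sum_reindex_le (H : ℕ) (φ : ℕ → ℝ) (hφ : ∀ d, 0 ≤ φ d) (A : Finset ℕ) (g : ℕ → ℕ)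
    (hinj : ∀ x ∈ A, ∀ y ∈ A, g x = g y → x = y) (himg : ∀ x ∈ A, g x ∈ Finset.Icc 1 H) :
    ∑ t ∈ A, φ (g t) ≤ ∑ d ∈ Finset.Icc 1 H, φ d := by
  rw [← Finset.sum_image hinj]
  refine Finset.sum_le_sum_of_subset_of_nonneg ?_ fun d _ _ => hφ d
  intro d hd
  obtain ⟨x, hx, rfl⟩ := Finset.mem_image.1 hd
  exact himg x hx

lemma corr_pairs (a : ℕ → ℂ) (ha : ∀ n, ‖a n‖ ≤ 1) (N H : ℕ) (hH : 1 ≤ H) :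
    ∑ s ∈ Finset.Icc 1 H, ∑ t ∈ Finset.Icc 1 H,
        ‖∑ n ∈ Finset.Icc 1 N, a (n + s) * conj' (a (n + t))‖ ≤
      (H:ℝ) * N + 2 * H * (∑ d ∈ Finset.Icc 1 H,
        ‖∑ n ∈ Finset.Icc 1 N, a n * conj' (a (n + d))‖) + 4 * H^3 := by
  set C : ℕ → ℝ := fun d => ‖∑ n ∈ Finset.Icc 1 N, a n * conj' (a (n + d))‖ with hCdef
  have hCnn : ∀ d, 0 ≤ C d + 2 * H := fun d =>
    add_nonneg (norm_nonneg _) (by positivity)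
  have inner_bd : ∀ s ∈ Finset.Icc 1 H,
      ∑ t ∈ Finset.Icc 1 H, ‖∑ n ∈ Finset.Icc 1 N, a (n + s) * conj' (a (n + t))‖ ≤
        (N:ℝ) + 2 * (∑ d ∈ Finset.Icc 1 H, (C d + 2 * H)) := by
    intro s hs
    rw [Finset.mem_Icc] at hs
    have set_eq : Finset.Icc 1 H = (Finset.Icc 1 (s-1) ∪ {s}) ∪ Finset.Icc (s+1) H := by
      ext t
      simp only [Finset.mem_Icc, Finset.mem_union, Finset.mem_singleton]
      omega
    have d2 : Disjoint (Finset.Icc 1 (s-1)) ({s} : Finset ℕ) := by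
      simp only [Finset.disjoint_singleton_right, Finset.mem_Icc]
      omega
    have d1 : Disjoint (Finset.Icc 1 (s-1) ∪ {s}) (Finset.Icc (s+1) H) := by
      rw [Finset.disjoint_left]
      intro t ht ht'
      simp only [Finset.mem_union, Finset.mem_singleton, Finset.mem_Icc] at ht ht'
      omega
    rw [show ∑ t ∈ Finset.Icc 1 H, ‖∑ n ∈ Finset.Icc 1 N, a (n + s) * conj' (a (n + t))‖
        = ∑ t ∈ (Finset.Icc 1 (s-1) ∪ {s}) ∪ Finset.Icc (s+1) H,
          ‖∑ n ∈ Finset.Icc 1 N, a (n + s) * conj' (a (n + t))‖ from by rw [← set_eq]]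
    rw [Finset.sum_union d1, Finset.sum_union d2, Finset.sum_singleton]
    have B2 : ‖∑ n ∈ Finset.Icc 1 N, a (n + s) * conj' (a (n + s))‖ ≤ (N:ℝ) := by
      have := norm_sum_le_card' (Finset.Icc 1 N)
        (fun n => a (n + s) * conj' (a (n + s))) (fun n => corr_prod_bd a ha s s n)
      simpa [Nat.card_Icc] using this
    have B1 : ∑ t ∈ Finset.Icc 1 (s-1),
        ‖∑ n ∈ Finset.Icc 1 N, a (n + s) * conj' (a (n + t))‖ ≤
        ∑ d ∈ Finset.Icc 1 H, (C d + 2 * H) := by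
      have step : ∀ t ∈ Finset.Icc 1 (s-1),
          ‖∑ n ∈ Finset.Icc 1 N, a (n + s) * conj' (a (n + t))‖ ≤ C (s - t) + 2 * H := by
        intro t ht
        rw [Finset.mem_Icc] at ht
        rw [corr_symm]
        exact corr_shift a ha N H t s ht.1 (by omega) (by omega)
      refine (Finset.sum_le_sum step).trans ?_
      refine sum_reindex_le H (fun d => C d + 2*H) hCnn _ (fun t => s - t) ?_ ?_
      · intro x hx y hy hxy
        simp only [Finset.mem_Icc] at hx hy
        have hxy' : s - x = s - y := hxy
        omega
      · intro x hx
        simp only [Finset.mem_Icc] at hx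
        show s - x ∈ Finset.Icc 1 H
        simp only [Finset.mem_Icc]
        omega
    have B3 : ∑ t ∈ Finset.Icc (s+1) H,
        ‖∑ n ∈ Finset.Icc 1 N, a (n + s) * conj' (a (n + t))‖ ≤
        ∑ d ∈ Finset.Icc 1 H, (C d + 2 * H) := by
      have step : ∀ t ∈ Finset.Icc (s+1) H,
          ‖∑ n ∈ Finset.Icc 1 N, a (n + s) * conj' (a (n + t))‖ ≤ C (t - s) + 2 * H := by
        intro t ht
        rw [Finset.mem_Icc] at ht
        exact corr_shift a ha N H s t hs.1 hs.2 (by omega)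
      refine (Finset.sum_le_sum step).trans ?_
      refine sum_reindex_le H (fun d => C d + 2*H) hCnn _ (fun t => t - s) ?_ ?_
      · intro x hx y hy hxy
        simp only [Finset.mem_Icc] at hx hy
        have hxy' : x - s = y - s := hxy
        omega
      · intro x hx
        simp only [Finset.mem_Icc] at hx
        show x - s ∈ Finset.Icc 1 H
        simp only [Finset.mem_Icc]
        omega
    linarith
  calc ∑ s ∈ Finset.Icc 1 H, ∑ t ∈ Finset.Icc 1 H,
        ‖∑ n ∈ Finset.Icc 1 N, a (n + s) * conj' (a (n + t))‖
      ≤ ∑ s ∈ Finset.Icc 1 H, ((N:ℝ) + 2 * (∑ d ∈ Finset.Icc 1 H, (C d + 2 * H))) :=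
        Finset.sum_le_sum inner_bd
    _ = (H:ℝ) * N + 2 * H * (∑ d ∈ Finset.Icc 1 H, C d) + 4 * H^3 := by
        have hcard : (Finset.Icc 1 H).card = H := by rw [Nat.card_Icc]; omega
        rw [Finset.sum_const, hcard, Finset.sum_add_distrib, Finset.sum_const, hcard,
          nsmul_eq_mul, nsmul_eq_mul]
        push_cast
        ring
    _ ≤ _ := le_refl _

lemma prod_bd {k : ℕ} (a : ℕ → ℂ) (ha : ∀ n, ‖a n‖ ≤ 1) (b : Fin k → ℕ → ℂ)
    (hb : ∀ i n, ‖b i n‖ ≤ 1) (h : Fin k → ℕ) (m : ℕ) :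
    ‖a m * ∏ i, b i (m + h i)‖ ≤ 1 := by
  rw [norm_mul]
  refine mul_le_one₀ (ha m) (norm_nonneg _) ?_
  rw [norm_prod]
  exact Finset.prod_le_one (fun i _ => norm_nonneg _) (fun i _ => hb i _)

lemma key_ineq (a : ℕ → ℂ) (k : ℕ) (b : Fin k → ℕ → ℂ)
    (ha : ∀ n, ‖a n‖ ≤ 1) (hb : ∀ i n, ‖b i n‖ ≤ 1) (H N : ℕ) (hH : 1 ≤ H) (hN : 1 ≤ N) :
    ((H : ℝ) ^ k)⁻¹ * ∑ h ∈ Fintype.piFinset (fun _ : Fin k => Finset.Icc 1 H),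
        (N : ℝ)⁻¹ * ‖∑ n ∈ Finset.Icc 1 N, a n * ∏ i, b i (n + h i)‖
    ≤ 2^k * Real.sqrt ((H:ℝ)⁻¹ + 2 * ((H : ℝ)⁻¹ * ∑ d ∈ Finset.Icc 1 H,
        (N : ℝ)⁻¹ * ‖∑ n ∈ Finset.Icc 1 N, a n * conj' (a (n + d))‖) + 4*(H:ℝ)/N)
      + 2*(H:ℝ)/N := by
  have hHpos : (0:ℝ) < H := by exact_mod_cast hH
  have hNpos : (0:ℝ) < N := by exact_mod_cast hN
  set P := Fintype.piFinset (fun _ : Fin k => Finset.Icc 1 H) with hP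
  set P2 := Fintype.piFinset (fun _ : Fin k => Finset.Icc 1 (2*H)) with hP2
  set Q := ∑ s ∈ Finset.Icc 1 H, ∑ t ∈ Finset.Icc 1 H,
      ‖∑ n ∈ Finset.Icc 1 N, a (n + s) * conj' (a (n + t))‖ with hQ
  set X := ∑ d ∈ Finset.Icc 1 H, ‖∑ n ∈ Finset.Icc 1 N, a n * conj' (a (n + d))‖ with hX
  have hXnn : 0 ≤ X := Finset.sum_nonneg fun d _ => norm_nonneg _
  have hQnn : 0 ≤ Q :=
    Finset.sum_nonneg fun s _ => Finset.sum_nonneg fun t _ => norm_nonneg _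
  have cardP : (P.card : ℝ) = (H:ℝ)^k := by
    rw [hP, Fintype.card_piFinset]
    simp [Nat.card_Icc]
  have cardP2 : (P2.card : ℝ) = (2*(H:ℝ))^k := by
    rw [hP2, Fintype.card_piFinset]
    push_cast [Nat.card_Icc]
    simp
  have cardH : ((Finset.Icc 1 H).card : ℝ) = (H:ℝ) := by simp [Nat.card_Icc]
  -- Step A : shifting
  have stepA : ∀ (h : Fin k → ℕ), ∀ s ∈ Finset.Icc 1 H,
      ‖∑ n ∈ Finset.Icc 1 N, a n * ∏ i, b i (n + h i)‖ ≤
      ‖∑ n ∈ Finset.Icc 1 N, a (n + s) * ∏ i, b i (n + (h i + s))‖ + 2*(H:ℝ) := by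
    intro h s hs
    rw [Finset.mem_Icc] at hs
    set f : ℕ → ℂ := fun m => a m * ∏ i, b i (m + h i) with hfdef
    have hf : ∀ m, ‖f m‖ ≤ 1 := fun m => prod_bd a ha b hb h m
    have heq : ∀ n, a (n + s) * ∏ i, b i (n + (h i + s)) = f (n + s) := by
      intro n
      rw [hfdef]
      simp only
      congr 1
      refine Finset.prod_congr rfl fun i _ => ?_
      congr 1
      omega
    rw [Finset.sum_congr rfl fun n _ => heq n]
    have hclose := shift_sum_close f hf N s
    have h1 : ‖∑ n ∈ Finset.Icc 1 N, f n‖ ≤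
        ‖∑ n ∈ Finset.Icc 1 N, f (n+s)‖ +
        ‖∑ n ∈ Finset.Icc 1 N, f (n+s) - ∑ n ∈ Finset.Icc 1 N, f n‖ := by
      rw [norm_sub_rev]
      have := norm_add_le (∑ n ∈ Finset.Icc 1 N, f (n+s))
        (∑ n ∈ Finset.Icc 1 N, f n - ∑ n ∈ Finset.Icc 1 N, f (n+s))
      simpa using this
    have hs' : (s:ℝ) ≤ H := by exact_mod_cast hs.2
    calc ‖∑ n ∈ Finset.Icc 1 N, f n‖ ≤ ‖∑ n ∈ Finset.Icc 1 N, f (n+s)‖ + 2*(s:ℝ) :=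
        h1.trans (by linarith)
      _ ≤ _ := by linarith
  -- Step A'' : reindexing h ↦ h + s
  have stepImg : ∀ s ∈ Finset.Icc 1 H,
      ∑ h ∈ P, ‖∑ n ∈ Finset.Icc 1 N, a (n + s) * ∏ i, b i (n + (h i + s))‖ ≤
      ∑ g ∈ P2, ‖∑ n ∈ Finset.Icc 1 N, a (n + s) * ∏ i, b i (n + g i)‖ := by
    intro s hs
    rw [Finset.mem_Icc] at hs
    have hinj : ∀ x ∈ P, ∀ y ∈ P,
        (fun i => x i + s) = (fun i => y i + s) → x = y := by
      intro x _ y _ hxy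
      funext i
      have := congrFun hxy i
      simpa using this
    have him : ∑ g ∈ P.image (fun h i => h i + s),
        ‖∑ n ∈ Finset.Icc 1 N, a (n + s) * ∏ i, b i (n + g i)‖
        = ∑ h ∈ P, ‖∑ n ∈ Finset.Icc 1 N, a (n + s) * ∏ i, b i (n + (h i + s))‖ :=
      Finset.sum_image hinj
    rw [← him]
    refine Finset.sum_le_sum_of_subset_of_nonneg ?_ fun g _ _ => norm_nonneg _
    intro g hg
    obtain ⟨x, hx, rfl⟩ := Finset.mem_image.1 hg
    rw [hP2, Fintype.mem_piFinset]
    intro i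
    have := (Fintype.mem_piFinset.1 (hP ▸ hx)) i
    rw [Finset.mem_Icc] at this ⊢
    omega
  -- combine A parts
  set SF := ∑ h ∈ P, ‖∑ n ∈ Finset.Icc 1 N, a n * ∏ i, b i (n + h i)‖ with hSF
  have hSFnn : 0 ≤ SF := Finset.sum_nonneg fun h _ => norm_nonneg _
  have main1 : (H:ℝ) * SF ≤
      (∑ s ∈ Finset.Icc 1 H, ∑ g ∈ P2,
        ‖∑ n ∈ Finset.Icc 1 N, a (n + s) * ∏ i, b i (n + g i)‖)
      + 2*(H:ℝ)^2*(H:ℝ)^k := by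
    have hstep : ∀ s ∈ Finset.Icc 1 H, SF ≤
        (∑ g ∈ P2, ‖∑ n ∈ Finset.Icc 1 N, a (n + s) * ∏ i, b i (n + g i)‖)
        + 2*(H:ℝ)*(H:ℝ)^k := by
      intro s hs
      calc SF ≤ ∑ h ∈ P,
          (‖∑ n ∈ Finset.Icc 1 N, a (n + s) * ∏ i, b i (n + (h i + s))‖ + 2*(H:ℝ)) :=
          Finset.sum_le_sum fun h _ => stepA h s hs
        _ = (∑ h ∈ P, ‖∑ n ∈ Finset.Icc 1 N, a (n + s) * ∏ i, b i (n + (h i + s))‖)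
            + 2*(H:ℝ)*(H:ℝ)^k := by
            rw [Finset.sum_add_distrib, Finset.sum_const, nsmul_eq_mul, cardP]
            ring
        _ ≤ _ := by
            have := stepImg s hs
            linarith
    have hsum1 : (H:ℝ) * SF = ∑ _s ∈ Finset.Icc 1 H, SF := by
      rw [Finset.sum_const, nsmul_eq_mul, cardH]
    have hsum2 : ∑ _s ∈ Finset.Icc 1 H, SF ≤ ∑ s ∈ Finset.Icc 1 H,
        ((∑ g ∈ P2, ‖∑ n ∈ Finset.Icc 1 N, a (n + s) * ∏ i, b i (n + g i)‖)
          + 2*(H:ℝ)*(H:ℝ)^k) := Finset.sum_le_sum hstep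
    have hsum3 : ∑ s ∈ Finset.Icc 1 H,
        ((∑ g ∈ P2, ‖∑ n ∈ Finset.Icc 1 N, a (n + s) * ∏ i, b i (n + g i)‖)
          + 2*(H:ℝ)*(H:ℝ)^k)
        = (∑ s ∈ Finset.Icc 1 H, ∑ g ∈ P2,
            ‖∑ n ∈ Finset.Icc 1 N, a (n + s) * ∏ i, b i (n + g i)‖)
          + 2*(H:ℝ)^2*(H:ℝ)^k := by
      rw [Finset.sum_add_distrib, Finset.sum_const, nsmul_eq_mul, cardH]
      ring
    linarith
  -- Step B : Cauchy-Schwarz with phases, per g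
  have main3 : ∑ s ∈ Finset.Icc 1 H, ∑ g ∈ P2,
      ‖∑ n ∈ Finset.Icc 1 N, a (n + s) * ∏ i, b i (n + g i)‖ ≤
      (2*(H:ℝ))^k * Real.sqrt ((N:ℝ) * Q) := by
    rw [Finset.sum_comm]
    calc ∑ g ∈ P2, ∑ s ∈ Finset.Icc 1 H,
        ‖∑ n ∈ Finset.Icc 1 N, a (n + s) * ∏ i, b i (n + g i)‖
        ≤ ∑ _g ∈ P2, Real.sqrt ((N:ℝ) * Q) := by
          refine Finset.sum_le_sum fun g _ => ?_
          exact phase_cs a (fun n => ∏ i, b i (n + g i))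
            (fun n => by
              rw [norm_prod]
              exact Finset.prod_le_one (fun i _ => norm_nonneg _) (fun i _ => hb i _)) N H
      _ = (2*(H:ℝ))^k * Real.sqrt ((N:ℝ) * Q) := by
          rw [Finset.sum_const, nsmul_eq_mul, cardP2]
  -- Step C
  have main4 : Q ≤ (H:ℝ)*N + 2*H*X + 4*(H:ℝ)^3 := corr_pairs a ha N H hH
  -- sqrt algebra
  set E := (H:ℝ)⁻¹ + 2 * ((H:ℝ)⁻¹ * ((N:ℝ)⁻¹ * X)) + 4*(H:ℝ)/N with hE
  have hEnn : 0 ≤ E := by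
    rw [hE]
    positivity
  have hsqrt : Real.sqrt ((N:ℝ) * Q) ≤ (H:ℝ) * N * Real.sqrt E := by
    have heq : ((H:ℝ)*N)^2 * E = (N:ℝ)*((H:ℝ)*N + 2*H*X + 4*(H:ℝ)^3) := by
      rw [hE]
      field_simp
    have e1 : Real.sqrt ((N:ℝ) * Q) ≤
        Real.sqrt ((N:ℝ)*((H:ℝ)*N + 2*H*X + 4*(H:ℝ)^3)) := by
      apply Real.sqrt_le_sqrt
      exact mul_le_mul_of_nonneg_left main4 (le_of_lt hNpos)
    have e2 : Real.sqrt ((N:ℝ)*((H:ℝ)*N + 2*H*X + 4*(H:ℝ)^3)) = (H:ℝ)*N*Real.sqrt E := by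
      rw [← heq, Real.sqrt_mul (sq_nonneg _), Real.sqrt_sq (by positivity)]
    exact e1.trans_eq e2
  -- assemble
  have hSF2 : SF ≤ (2*(H:ℝ))^k * N * Real.sqrt E + 2*(H:ℝ)*(H:ℝ)^k := by
    have h5 : (H:ℝ) * SF ≤ (2*(H:ℝ))^k * ((H:ℝ) * N * Real.sqrt E) + 2*(H:ℝ)^2*(H:ℝ)^k := by
      refine main1.trans ?_
      have := main3.trans (mul_le_mul_of_nonneg_left hsqrt (by positivity))
      linarith
    have h6 : (H:ℝ) * SF ≤ (H:ℝ) * ((2*(H:ℝ))^k * N * Real.sqrt E + 2*(H:ℝ)*(H:ℝ)^k) := by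
      calc (H:ℝ) * SF ≤ (2*(H:ℝ))^k * ((H:ℝ) * N * Real.sqrt E) + 2*(H:ℝ)^2*(H:ℝ)^k := h5
        _ = (H:ℝ) * ((2*(H:ℝ))^k * N * Real.sqrt E + 2*(H:ℝ)*(H:ℝ)^k) := by ring
    exact le_of_mul_le_mul_left h6 hHpos
  -- final computation
  have lhs_eq : ((H : ℝ) ^ k)⁻¹ * ∑ h ∈ P, (N : ℝ)⁻¹ *
      ‖∑ n ∈ Finset.Icc 1 N, a n * ∏ i, b i (n + h i)‖ =
      ((H:ℝ)^k)⁻¹ * ((N:ℝ)⁻¹ * SF) := by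
    rw [hSF, Finset.mul_sum, Finset.mul_sum, Finset.mul_sum]
  have rhs_eq : ∑ d ∈ Finset.Icc 1 H, (N : ℝ)⁻¹ *
      ‖∑ n ∈ Finset.Icc 1 N, a n * conj' (a (n + d))‖ = (N:ℝ)⁻¹ * X := by
    rw [hX, Finset.mul_sum]
  rw [lhs_eq, rhs_eq]
  have goal_eq : (2:ℝ)^k * Real.sqrt ((H:ℝ)⁻¹ + 2 * ((H : ℝ)⁻¹ * ((N:ℝ)⁻¹ * X)) + 4*(H:ℝ)/N)
      = 2^k * Real.sqrt E := by rw [hE]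
  rw [goal_eq]
  have f1 : ((H:ℝ)^k)⁻¹ * ((N:ℝ)⁻¹ * SF)
      ≤ ((H:ℝ)^k)⁻¹ * ((N:ℝ)⁻¹ * ((2*(H:ℝ))^k * N * Real.sqrt E + 2*(H:ℝ)*(H:ℝ)^k)) := by
    have h7 : (0:ℝ) ≤ ((H:ℝ)^k)⁻¹ := by positivity
    have h8 : (0:ℝ) ≤ (N:ℝ)⁻¹ := by positivity
    exact mul_le_mul_of_nonneg_left (mul_le_mul_of_nonneg_left hSF2 h8) h7
  have f2 : ((H:ℝ)^k)⁻¹ * ((N:ℝ)⁻¹ * ((2*(H:ℝ))^k * N * Real.sqrt E + 2*(H:ℝ)*(H:ℝ)^k))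
      = 2^k * Real.sqrt E + 2*(H:ℝ)/N := by
    rw [mul_pow]
    field_simp
  exact f1.trans_eq f2

lemma avg_le_one {ι : Type*} (A : Finset ι) (c : ℝ) (g : ι → ℝ)
    (hc : 0 < c) (hcard : (A.card : ℝ) = c) (hg : ∀ i ∈ A, g i ≤ 1) (hg0 : ∀ i ∈ A, 0 ≤ g i) :
    c⁻¹ * ∑ i ∈ A, g i ≤ 1 := by
  have h1 : ∑ i ∈ A, g i ≤ c := by
    calc ∑ i ∈ A, g i ≤ ∑ _i ∈ A, (1:ℝ) := Finset.sum_le_sum hg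
      _ = c := by rw [Finset.sum_const, nsmul_eq_mul, mul_one, hcard]
  calc c⁻¹ * ∑ i ∈ A, g i ≤ c⁻¹ * c := by
        exact mul_le_mul_of_nonneg_left h1 (by positivity)
    _ = 1 := inv_mul_cancel₀ (ne_of_gt hc)


end AvgCorrAux

open AvgCorrAux in
/-- From averaged double correlations to averaged multiple correlations.  Let
`(N_ℓ)` be an increasing sequence of positive integers, `k ≥ 1`, and let
`a, b₁, …, b_k : ℕ → ℂ` be bounded by `1`.  If
`lim_H limsup_ℓ (1/H) ∑_{h ≤ H} (1/N_ℓ) |∑_{n ≤ N_ℓ} a(n) conj(a(n+h))| = 0`,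
then
`lim_H limsup_ℓ (1/Hᵏ) ∑_{h₁,…,h_k ≤ H} (1/N_ℓ) |∑_{n ≤ N_ℓ} a(n) ∏ᵢ bᵢ(n+hᵢ)| = 0`. -/
theorem averaged_double_to_multiple_correlations
    (N : ℕ → ℕ) (hN : StrictMono N) (hNpos : ∀ ℓ, 0 < N ℓ)
    (k : ℕ) (hk : 1 ≤ k)
    (a : ℕ → ℂ) (b : Fin k → ℕ → ℂ)
    (ha : ∀ n, ‖a n‖ ≤ 1) (hb : ∀ i n, ‖b i n‖ ≤ 1)
    (hcorr : Tendsto (fun H : ℕ =>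
        Filter.limsup (fun ℓ => (H : ℝ)⁻¹ * ∑ h ∈ Finset.Icc 1 H,
            (N ℓ : ℝ)⁻¹ * ‖∑ n ∈ Finset.Icc 1 (N ℓ), a n * (starRingEnd ℂ) (a (n + h))‖)
          atTop)
        atTop (nhds 0)) :
    Tendsto (fun H : ℕ =>
        Filter.limsup (fun ℓ => ((H : ℝ) ^ k)⁻¹ *
            ∑ h ∈ Fintype.piFinset (fun _ : Fin k => Finset.Icc 1 H),
              (N ℓ : ℝ)⁻¹ * ‖∑ n ∈ Finset.Icc 1 (N ℓ), a n * ∏ i, b i (n + h i)‖)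
          atTop)
      atTop (nhds 0) := by
  have hN1 : ∀ ℓ, 1 ≤ N ℓ := fun ℓ => hNpos ℓ
  -- bounds for the T and D quantities
  have hTnn : ∀ (H ℓ : ℕ), 0 ≤ ((H : ℝ) ^ k)⁻¹ *
      ∑ h ∈ Fintype.piFinset (fun _ : Fin k => Finset.Icc 1 H),
        (N ℓ : ℝ)⁻¹ * ‖∑ n ∈ Finset.Icc 1 (N ℓ), a n * ∏ i, b i (n + h i)‖ := by
    intro H ℓ
    positivity
  have hT1 : ∀ (H : ℕ), 1 ≤ H → ∀ (ℓ : ℕ), ((H : ℝ) ^ k)⁻¹ *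
      ∑ h ∈ Fintype.piFinset (fun _ : Fin k => Finset.Icc 1 H),
        (N ℓ : ℝ)⁻¹ * ‖∑ n ∈ Finset.Icc 1 (N ℓ), a n * ∏ i, b i (n + h i)‖ ≤ 1 := by
    intro H hH ℓ
    have hHpos : (0:ℝ) < H := by exact_mod_cast hH
    have hNl : (0:ℝ) < N ℓ := by exact_mod_cast hNpos ℓ
    refine avg_le_one _ ((H:ℝ)^k) _ (by positivity) ?_ ?_ ?_
    · rw [Fintype.card_piFinset]
      simp [Nat.card_Icc]
    · intro h _
      have hnorm : ‖∑ n ∈ Finset.Icc 1 (N ℓ), a n * ∏ i, b i (n + h i)‖ ≤ ((N ℓ : ℝ)) := by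
        have := norm_sum_le_card' (Finset.Icc 1 (N ℓ)) _
          (fun m => prod_bd a ha b hb h m)
        simpa [Nat.card_Icc] using this
      rw [inv_mul_le_iff₀ hNl, mul_one]
      exact hnorm
    · intro h _
      positivity
  have hDnn : ∀ (H ℓ : ℕ), 0 ≤ (H : ℝ)⁻¹ * ∑ h ∈ Finset.Icc 1 H,
      (N ℓ : ℝ)⁻¹ * ‖∑ n ∈ Finset.Icc 1 (N ℓ), a n * (starRingEnd ℂ) (a (n + h))‖ := by
    intro H ℓ
    positivity
  have hD1 : ∀ (H : ℕ), 1 ≤ H → ∀ (ℓ : ℕ), (H : ℝ)⁻¹ * ∑ h ∈ Finset.Icc 1 H,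
      (N ℓ : ℝ)⁻¹ * ‖∑ n ∈ Finset.Icc 1 (N ℓ), a n * (starRingEnd ℂ) (a (n + h))‖ ≤ 1 := by
    intro H hH ℓ
    have hHpos : (0:ℝ) < H := by exact_mod_cast hH
    have hNl : (0:ℝ) < N ℓ := by exact_mod_cast hNpos ℓ
    refine avg_le_one _ ((H:ℝ)) _ hHpos (by simp [Nat.card_Icc]) ?_ ?_
    · intro d _
      have hnorm : ‖∑ n ∈ Finset.Icc 1 (N ℓ), a n * (starRingEnd ℂ) (a (n + d))‖
          ≤ ((N ℓ : ℝ)) := by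
        have := norm_sum_le_card' (Finset.Icc 1 (N ℓ))
          (fun m => a m * (starRingEnd ℂ) (a (m + d)))
          (fun m => by
            rw [norm_mul, RCLike.norm_conj]
            exact mul_le_one₀ (ha _) (norm_nonneg _) (ha _))
        simpa [Nat.card_Icc] using this
      rw [inv_mul_le_iff₀ hNl, mul_one]
      exact hnorm
    · intro d _
      positivity
  rw [Metric.tendsto_atTop] at hcorr ⊢
  intro ε hε
  set δ : ℝ := min (ε/8) (ε^2 / (7 * 4^(k+1))) with hδdef
  have hδpos : 0 < δ := by
    rw [hδdef]
    have : (0:ℝ) < ε^2 / (7 * 4^(k+1)) := by positivity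
    have h8 : (0:ℝ) < ε/8 := by positivity
    exact lt_min h8 this
  have hδ1 : δ ≤ ε/8 := min_le_left _ _
  have hδ2 : δ ≤ ε^2 / (7 * 4^(k+1)) := min_le_right _ _
  obtain ⟨H₁, hH₁⟩ := hcorr δ hδpos
  refine ⟨max (max H₁ 1) (⌈(1:ℝ)/δ⌉₊ + 1), fun H hHM => ?_⟩
  have hH1 : 1 ≤ H := le_trans (le_trans (le_max_right _ _) (le_max_left _ _)) hHM
  have hHH₁ : H₁ ≤ H := le_trans (le_trans (le_max_left _ _) (le_max_left _ _)) hHM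
  have hHpos : (0:ℝ) < H := by exact_mod_cast hH1
  have hHinv : (H:ℝ)⁻¹ ≤ δ := by
    have hceil : (1:ℝ)/δ ≤ ⌈(1:ℝ)/δ⌉₊ := Nat.le_ceil _
    have hcH : (⌈(1:ℝ)/δ⌉₊ : ℝ) ≤ H := by
      have h' : ⌈(1:ℝ)/δ⌉₊ ≤ H := le_trans (Nat.le_succ _) (le_trans (le_max_right _ _) hHM)
      exact_mod_cast h'
    have h1H : (1:ℝ)/δ ≤ H := le_trans hceil hcH
    rw [div_le_iff₀ hδpos] at h1H
    rw [inv_eq_one_div, div_le_iff₀ hHpos]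
    linarith
  -- limsup of D at H is < δ, hence D eventually < δ
  have hld : Filter.limsup (fun ℓ => (H : ℝ)⁻¹ * ∑ h ∈ Finset.Icc 1 H,
      (N ℓ : ℝ)⁻¹ * ‖∑ n ∈ Finset.Icc 1 (N ℓ), a n * (starRingEnd ℂ) (a (n + h))‖)
      atTop < δ := by
    have hd := hH₁ H hHH₁
    rw [Real.dist_eq, sub_zero] at hd
    exact lt_of_le_of_lt (le_abs_self _) hd
  have hbdD : IsBoundedUnder (· ≤ ·) atTop (fun ℓ => (H : ℝ)⁻¹ * ∑ h ∈ Finset.Icc 1 H,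
      (N ℓ : ℝ)⁻¹ * ‖∑ n ∈ Finset.Icc 1 (N ℓ), a n * (starRingEnd ℂ) (a (n + h))‖) :=
    isBoundedUnder_of ⟨1, fun ℓ => hD1 H hH1 ℓ⟩
  have evD : ∀ᶠ ℓ in atTop, (H : ℝ)⁻¹ * ∑ h ∈ Finset.Icc 1 H,
      (N ℓ : ℝ)⁻¹ * ‖∑ n ∈ Finset.Icc 1 (N ℓ), a n * (starRingEnd ℂ) (a (n + h))‖ < δ :=
    eventually_lt_of_limsup_lt hld hbdD
  have evN : ∀ᶠ ℓ in atTop, (H:ℝ)/(N ℓ) ≤ δ := by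
    rw [eventually_atTop]
    refine ⟨⌈(H:ℝ)/δ⌉₊, fun ℓ hℓ => ?_⟩
    have hNl : (0:ℝ) < N ℓ := by exact_mod_cast hNpos ℓ
    have h1 : (H:ℝ)/δ ≤ ⌈(H:ℝ)/δ⌉₊ := Nat.le_ceil _
    have h2 : ((⌈(H:ℝ)/δ⌉₊ : ℕ) : ℝ) ≤ N ℓ := by
      have h' : ⌈(H:ℝ)/δ⌉₊ ≤ N ℓ := le_trans hℓ hN.le_apply
      exact_mod_cast h'
    have h3 : (H:ℝ)/δ ≤ N ℓ := le_trans h1 h2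
    rw [div_le_iff₀ hδpos] at h3
    rw [div_le_iff₀ hNl]
    linarith
  -- eventually T is small
  have evT : ∀ᶠ ℓ in atTop, ((H : ℝ) ^ k)⁻¹ *
      ∑ h ∈ Fintype.piFinset (fun _ : Fin k => Finset.Icc 1 H),
        (N ℓ : ℝ)⁻¹ * ‖∑ n ∈ Finset.Icc 1 (N ℓ), a n * ∏ i, b i (n + h i)‖ ≤
      2^k * Real.sqrt (δ + 2*δ + 4*δ) + 2*δ := by
    filter_upwards [evD, evN] with ℓ hDl hNl
    have hNlpos : (0:ℝ) < N ℓ := by exact_mod_cast hNpos ℓ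
    have hkey := key_ineq a k b ha hb H (N ℓ) hH1 (hN1 ℓ)
    refine hkey.trans ?_
    have hdiv4 : 4*(H:ℝ)/(N ℓ) = 4*((H:ℝ)/(N ℓ)) := by ring
    have hdiv2 : 2*(H:ℝ)/(N ℓ) = 2*((H:ℝ)/(N ℓ)) := by ring
    have hDl0 := hDnn H ℓ
    have hs : Real.sqrt ((H:ℝ)⁻¹ + 2 * ((H : ℝ)⁻¹ * ∑ d ∈ Finset.Icc 1 H,
        (N ℓ : ℝ)⁻¹ * ‖∑ n ∈ Finset.Icc 1 (N ℓ), a n * (starRingEnd ℂ) (a (n + d))‖)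
          + 4*(H:ℝ)/(N ℓ)) ≤ Real.sqrt (δ + 2*δ + 4*δ) := by
      apply Real.sqrt_le_sqrt
      rw [hdiv4]
      linarith
    have ht : 2*(H:ℝ)/(N ℓ) ≤ 2*δ := by
      rw [hdiv2]
      linarith
    have h2k0 : (0:ℝ) ≤ 2^k := by positivity
    exact add_le_add (mul_le_mul_of_nonneg_left hs h2k0) ht
  -- the bound is at most 3ε/4
  have hbound : 2^k * Real.sqrt (δ + 2*δ + 4*δ) + 2*δ ≤ 3*ε/4 := by
    have hp2 : ((2:ℝ)^(k+1))^2 = 4^(k+1) := by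
      rw [← pow_mul, show (4:ℝ) = 2^2 by norm_num, ← pow_mul, Nat.mul_comm]
    have hp : (ε/2^(k+1))^2 = ε^2/4^(k+1) := by rw [div_pow, hp2]
    have heq7 : (7:ℝ) * (ε^2/(7*4^(k+1))) = ε^2/4^(k+1) := by
      field_simp
    have h7 : 7*δ ≤ (ε/2^(k+1))^2 := by
      rw [hp]
      linarith
    have hs1 : Real.sqrt (δ + 2*δ + 4*δ) ≤ ε/2^(k+1) := by
      rw [show δ+2*δ+4*δ = 7*δ by ring]
      calc Real.sqrt (7*δ) ≤ Real.sqrt ((ε/2^(k+1))^2) := Real.sqrt_le_sqrt h7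
        _ = ε/2^(k+1) := Real.sqrt_sq (by positivity)
    have h2k : (2:ℝ)^k * (ε/2^(k+1)) = ε/2 := by
      rw [pow_succ]
      field_simp
    have h2k0 : (0:ℝ) ≤ 2^k := by positivity
    have := mul_le_mul_of_nonneg_left hs1 h2k0
    linarith
  -- conclude
  have hcb : IsCoboundedUnder (· ≤ ·) atTop (fun ℓ => ((H : ℝ) ^ k)⁻¹ *
      ∑ h ∈ Fintype.piFinset (fun _ : Fin k => Finset.Icc 1 H),
        (N ℓ : ℝ)⁻¹ * ‖∑ n ∈ Finset.Icc 1 (N ℓ), a n * ∏ i, b i (n + h i)‖) :=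
    Filter.isCoboundedUnder_le_of_eventually_le atTop
      (Eventually.of_forall fun ℓ => hTnn H ℓ)
  have hlimT : Filter.limsup (fun ℓ => ((H : ℝ) ^ k)⁻¹ *
      ∑ h ∈ Fintype.piFinset (fun _ : Fin k => Finset.Icc 1 H),
        (N ℓ : ℝ)⁻¹ * ‖∑ n ∈ Finset.Icc 1 (N ℓ), a n * ∏ i, b i (n + h i)‖) atTop
      ≤ 3*ε/4 :=
    Filter.limsup_le_of_le hcb (evT.mono fun ℓ hl => hl.trans hbound)
  have hlimT0 : 0 ≤ Filter.limsup (fun ℓ => ((H : ℝ) ^ k)⁻¹ *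
      ∑ h ∈ Fintype.piFinset (fun _ : Fin k => Finset.Icc 1 H),
        (N ℓ : ℝ)⁻¹ * ‖∑ n ∈ Finset.Icc 1 (N ℓ), a n * ∏ i, b i (n + h i)‖) atTop :=
    le_limsup_of_frequently_le (Frequently.of_forall fun ℓ => hTnn H ℓ)
      (isBoundedUnder_of ⟨1, fun ℓ => hT1 H hH1 ℓ⟩)
  rw [Real.dist_eq, sub_zero, abs_of_nonneg hlimT0]
  linarith
end
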